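/- arXiv:2604.09520 — 4 statements merged into one kernel-verified Lean document; each statement's English description precedes it below -/
import Mathlib

section
/- For d odd with d < n, the edge-expansion of the distance-d Hamming graph satisfies h(Q_n^d) ≥ C(n,d)/(2n). -/
open Finset
open scoped symmDiff


def Qnd (n d : ℕ) : SimpleGraph (Fin n → Bool) where
  Adj x y := x ≠ y ∧ hammingDist x y = d
  symm := by
    refine ⟨fun x y h => ?_⟩
    exact ⟨h.1.symm, by rw [hammingDist_comm]; exact h.2⟩
  loopless := by refine ⟨fun x h => ?_⟩; exact h.1 rfl

instance (n d : ℕ) : DecidableRel (Qnd n d).Adj := fun x y =>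
  inferInstanceAs (Decidable (x ≠ y ∧ hammingDist x y = d))

namespace QndProof
variable {n : ℕ}


def vx (x y : Fin n → Bool) : Fin n → Bool := fun i => xor (x i) (y i)
def supp (x : Fin n → Bool) : Finset (Fin n) := univ.filter fun i => x i = true
def wt (x : Fin n → Bool) : ℕ := #(supp x)
def chi (T : Finset (Fin n)) : Fin n → Bool := fun i => decide (i ∈ T)

lemma vx_assoc (x y z : Fin n → Bool) : vx (vx x y) z = vx x (vx y z) := by
  funext i; simp [vx, Bool.xor_assoc]
lemma vx_self (x : Fin n → Bool) : vx x x = fun _ => false := by funext i; simp [vx]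
lemma vx_zero (x : Fin n → Bool) : vx (fun _ => false) x = x := by funext i; simp [vx]
lemma vx_vx_cancel (z x : Fin n → Bool) : vx z (vx z x) = x := by
  rw [← vx_assoc, vx_self, vx_zero]
lemma supp_chi (T : Finset (Fin n)) : supp (chi T) = T := by ext i; simp [supp, chi]
lemma wt_chi (T : Finset (Fin n)) : wt (chi T) = #T := by rw [wt, supp_chi]
lemma chi_supp (x : Fin n → Bool) : chi (supp x) = x := by
  funext i; cases hx : x i <;> simp [chi, supp, hx]
lemma supp_vx (x y : Fin n → Bool) : supp (vx x y) = supp x ∆ supp y := by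
  ext i; cases hx : x i <;> cases hy : y i <;> simp [supp, vx, hx, hy, symmDiff_def]
lemma vx_chi (A B : Finset (Fin n)) : vx (chi A) (chi B) = chi (A ∆ B) := by
  funext i; by_cases hA : i ∈ A <;> by_cases hB : i ∈ B <;> simp [chi, vx, hA, hB, symmDiff_def]

lemma wt_le (x : Fin n → Bool) : wt x ≤ n := by
  simpa [wt] using card_le_card (le_trans (filter_subset _ _) (le_refl univ) : supp x ⊆ univ)

lemma wt_eq_zero {x : Fin n → Bool} (h : wt x = 0) : x = fun _ => false := by
  have : supp x = ∅ := card_eq_zero.mp h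
  have := chi_supp x
  rw [this] at *
  · funext i; have : chi (∅ : Finset (Fin n)) = x := by rw [← ‹supp x = ∅›]; exact chi_supp x
    rw [← this]; simp [chi]

def lsum : List (Fin n → Bool) → (Fin n → Bool) := fun l => l.foldr vx (fun _ => false)

@[simp] lemma lsum_nil : lsum ([] : List (Fin n → Bool)) = fun _ => false := rfl
@[simp] lemma lsum_cons (z : Fin n → Bool) (l) : lsum (z :: l) = vx z (lsum l) := rfl

variable {d : ℕ}

lemma exists_two (hd : Odd d) (hdn : d < n) (i j : Fin n) (hij : i ≠ j) :
    ∃ z z' : Fin n → Bool, wt z = d ∧ wt z' = d ∧ vx z z' = chi {i, j} := by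
  have h1 : ({i} : Finset (Fin n)) ⊆ {j}ᶜ := by
    intro a ha; simp at ha; simp [ha, hij]
  have h2 : (1 : ℕ) ≤ d := hd.pos
  have h3 : d ≤ #({j}ᶜ : Finset (Fin n)) := by
    rw [card_compl]; simp; omega
  obtain ⟨Z, hiZ, hZj, hZcard⟩ := exists_subsuperset_card_eq h1 (by simpa using h2) h3
  have hi : i ∈ Z := hiZ (by simp)
  have hj : j ∉ Z := fun h => by simpa using hZj h
  refine ⟨chi Z, chi (Z ∆ {i, j}), by rw [wt_chi, hZcard], ?_, ?_⟩
  · rw [wt_chi]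
    have hcard : #(Z ∆ ({i,j} : Finset (Fin n))) = d := by
      rw [symmDiff_def, sup_eq_union, card_union_of_disjoint]
      swap
      · simp only [disjoint_left]; intro a ha hb; simp at ha hb; tauto
      have e1 : Z \ ({i,j} : Finset (Fin n)) = Z \ {i} := by
        ext a; simp only [mem_sdiff, mem_insert, mem_singleton]
        constructor
        · rintro ⟨hz, hn⟩; exact ⟨hz, fun h => hn (Or.inl h)⟩
        · rintro ⟨hz, hn⟩
          refine ⟨hz, ?_⟩
          rintro (h | h)
          · exact hn h
          · exact hj (h ▸ hz)
      have e2 : ({i,j} : Finset (Fin n)) \ Z = {j} := by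
        ext a; simp; constructor
        · rintro ⟨h | h, hZ⟩
          · exact absurd hi (h ▸ hZ)
          · exact h
        · rintro rfl; exact ⟨Or.inr rfl, hj⟩
      rw [e1, e2, card_sdiff_of_subset (by simpa using hi)]
      simp [hZcard]; omega
    exact hcard
  · rw [vx_chi, ← symmDiff_assoc, symmDiff_self]
    ext a
    simp [symmDiff_def]

lemma decomp_even (hd : Odd d) (hdn : d < n) :
    ∀ k, ∀ g : Fin n → Bool, wt g = 2 * k →
    ∃ l : List (Fin n → Bool), (∀ z ∈ l, wt z = d) ∧ lsum l = g ∧ l.length ≤ 2 * k := by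
  intro k
  induction k with
  | zero => intro g hg; exact ⟨[], by simp, (wt_eq_zero (by simpa using hg)).symm, by simp⟩
  | succ k ih =>
    intro g hg
    have h2 : 1 < #(supp g) := by rw [← wt] at *; omega
    obtain ⟨i, hi, j, hj, hij⟩ := one_lt_card.mp h2
    have hijsub : ({i, j} : Finset (Fin n)) ⊆ supp g := by
      intro a ha; simp at ha; rcases ha with rfl | rfl <;> assumption
    set g' := vx (chi {i, j}) g with hg'
    have hsuppg' : supp g' = supp g \ {i, j} := by
      rw [hg', supp_vx, supp_chi, symmDiff_def]
      rw [sdiff_eq_empty_iff_subset.mpr hijsub]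
      simp [union_comm]
    have hwtg' : wt g' = 2 * k := by
      rw [wt, hsuppg', card_sdiff_of_subset hijsub, ← wt, hg, card_pair hij]; omega
    obtain ⟨l', hl'd, hl'sum, hl'len⟩ := ih g' hwtg'
    obtain ⟨z, z', hz, hz', hzz'⟩ := exists_two hd hdn i j hij
    refine ⟨z :: z' :: l', ?_, ?_, by simp; omega⟩
    · intro w hw; simp at hw; rcases hw with rfl | rfl | hw
      · exact hz
      · exact hz'
      · exact hl'd w hw
    · rw [lsum_cons, lsum_cons, hl'sum, ← vx_assoc, hzz', hg', vx_vx_cancel]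

lemma decomp (hd : Odd d) (hdn : d < n) (g : Fin n → Bool) :
    ∃ l : List (Fin n → Bool), (∀ z ∈ l, wt z = d) ∧ lsum l = g ∧ l.length ≤ n := by
  rcases Nat.even_or_odd (wt g) with he | ho
  · obtain ⟨k, hk⟩ := he
    obtain ⟨l, h1, h2, h3⟩ := decomp_even hd hdn k g (by omega)
    exact ⟨l, h1, h2, by have := wt_le g; omega⟩
  · have hpos : 1 ≤ wt g := ho.pos
    rcases le_or_gt d (wt g) with hcase | hcase
    · -- choose Z ⊆ supp g with #Z = d
      obtain ⟨Z, hZsub, hZcard⟩ := exists_subset_card_eq (by rw [← wt] at *; omega : d ≤ #(supp g))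
      set g' := vx (chi Z) g with hg'
      have hsuppg' : supp g' = supp g \ Z := by
        rw [hg', supp_vx, supp_chi, symmDiff_def, sdiff_eq_empty_iff_subset.mpr hZsub]
        simp [union_comm]
      have hwt' : wt g' = wt g - d := by
        rw [wt, hsuppg', card_sdiff_of_subset hZsub, ← wt, hZcard]
      have heven : Even (wt g') := by
        rw [hwt']; exact Nat.Odd.sub_odd ho hd
      obtain ⟨k, hk⟩ := heven
      obtain ⟨l', h1, h2, h3⟩ := decomp_even hd hdn k g' (by omega)
      refine ⟨chi Z :: l', ?_, ?_, ?_⟩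
      · intro w hw; simp at hw; rcases hw with rfl | hw
        · rw [wt_chi, hZcard]
        · exact h1 w hw
      · rw [lsum_cons, h2, hg', vx_vx_cancel]
      · have hd1 : 1 ≤ d := hd.pos
        have := wt_le g
        simp only [List.length_cons]
        omega
    · obtain ⟨Z, hZsub, hZcard⟩ := exists_superset_card_eq
        (le_of_lt (by rw [← wt] at *; omega : #(supp g) < d))
        (by simp [Fintype.card_fin]; omega)
      set g' := vx (chi Z) g with hg'
      have hsuppg' : supp g' = Z \ supp g := by
        rw [hg', supp_vx, supp_chi, symmDiff_def]
        rw [(sdiff_eq_empty_iff_subset.mpr hZsub : supp g \ Z = ∅)]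
        simp
      have hwt' : wt g' = d - wt g := by
        rw [wt, hsuppg', card_sdiff_of_subset hZsub, ← wt, hZcard]
      have heven : Even (wt g') := by
        rw [hwt']; exact Nat.Odd.sub_odd hd ho
      obtain ⟨k, hk⟩ := heven
      obtain ⟨l', h1, h2, h3⟩ := decomp_even hd hdn k g' (by omega)
      refine ⟨chi Z :: l', ?_, ?_, ?_⟩
      · intro w hw; simp at hw; rcases hw with rfl | hw
        · rw [wt_chi, hZcard]
        · exact h1 w hw
      · rw [lsum_cons, h2, hg', vx_vx_cancel]
      · have hb : l'.length ≤ d - 1 := by omega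
        simp only [List.length_cons]
        omega


lemma vx_comm (x y : Fin n → Bool) : vx x y = vx y x := by
  funext i; simp [vx, Bool.xor_comm]
lemma vx_zero_right (x : Fin n → Bool) : vx x (fun _ => false) = x := by funext i; simp [vx]
def pact (π : Equiv.Perm (Fin n)) (g : Fin n → Bool) : Fin n → Bool := fun i => g (π i)

lemma pact_vx (π : Equiv.Perm (Fin n)) (x y : Fin n → Bool) :
    pact π (vx x y) = vx (pact π x) (pact π y) := rfl

lemma pact_zero (π : Equiv.Perm (Fin n)) : pact π (fun _ => false) = (fun _ => false) := rfl

lemma pact_pact (π σ : Equiv.Perm (Fin n)) (g : Fin n → Bool) :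
    pact π (pact σ g) = pact (π.trans σ) g := rfl

lemma supp_pact (π : Equiv.Perm (Fin n)) (g : Fin n → Bool) :
    supp (pact π g) = (supp g).map π.symm.toEmbedding := by
  ext i
  rw [mem_map_equiv]
  simp [supp, pact, Finset.mem_filter]
  exact Finset.mem_filter.trans (by simp)

lemma wt_pact (π : Equiv.Perm (Fin n)) (g : Fin n → Bool) : wt (pact π g) = wt g := by
  rw [wt, supp_pact, card_map, wt]

def pactE (π : Equiv.Perm (Fin n)) : (Fin n → Bool) ≃ (Fin n → Bool) :=
  Equiv.arrowCongr π.symm (Equiv.refl Bool)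

lemma pactE_apply (π : Equiv.Perm (Fin n)) (g : Fin n → Bool) : pactE π g = pact π g := by
  funext i; simp [pactE, pact, Equiv.arrowCongr]

lemma exists_perm_pact {u u' : Fin n → Bool} (h : wt u = wt u') :
    ∃ σ : Equiv.Perm (Fin n), pact σ u = u' := by
  classical
  set A := supp u with hA
  set A' := supp u' with hA'
  have hcard : Fintype.card {x // x ∈ A'} = Fintype.card {x // x ∈ A} := by
    simp only [Fintype.card_coe]
    exact h.symm
  have hcardc : Fintype.card {x : Fin n // x ∉ A'} = Fintype.card {x : Fin n // x ∉ A} := by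
    have e1 : Fintype.card {x : Fin n // x ∉ A'} = n - #A' := by
      rw [Fintype.card_subtype_compl]
      simp [Fintype.card_coe]
    have e2 : Fintype.card {x : Fin n // x ∉ A} = n - #A := by
      rw [Fintype.card_subtype_compl]
      simp [Fintype.card_coe]
    rw [e1, e2]
    have hAA : #A = #A' := h
    omega
  obtain ⟨e1⟩ := Fintype.card_eq.mp hcard
  obtain ⟨e2⟩ := Fintype.card_eq.mp hcardc
  set σ : Equiv.Perm (Fin n) :=
    ((Equiv.sumCompl (· ∈ A')).symm.trans ((e1.sumCongr e2).trans (Equiv.sumCompl (· ∈ A))))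
    with hσ
  have hmem : ∀ i, σ i ∈ A ↔ i ∈ A' := by
    intro i
    by_cases hi : i ∈ A'
    · simp only [hσ, Equiv.trans_apply, Equiv.sumCompl_symm_apply_of_pos hi,
        Equiv.sumCongr_apply, Sum.map_inl, Equiv.sumCompl_apply_inl]
      exact ⟨fun _ => hi, fun _ => (e1 ⟨i, hi⟩).2⟩
    · simp only [hσ, Equiv.trans_apply, Equiv.sumCompl_symm_apply_of_neg hi,
        Equiv.sumCongr_apply, Sum.map_inr, Equiv.sumCompl_apply_inr]
      exact ⟨fun hc => absurd hc (e2 ⟨i, hi⟩).2, fun hc => absurd hc hi⟩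
  refine ⟨σ, ?_⟩
  funext i
  have := hmem i
  rw [hA, hA'] at this
  simp only [supp, mem_filter, mem_univ, true_and] at this
  cases h' : u' i
  · rw [pact]
    cases hui : u (σ i)
    · rfl
    · exact absurd (this.mp hui) (by simp [h'])
  · exact this.mpr h'


variable (U : Finset (Fin n → Bool))


def eb (g : Fin n → Bool) : ℕ := #(U.filter fun x => vx g x ∉ U)

lemma eb_zero : eb U (fun _ => false) = 0 := by
  rw [eb]
  convert card_empty
  rw [filter_eq_empty_iff]
  intro x hx
  rw [vx_zero]
  simp [hx]

lemma eb_subadd (g h : Fin n → Bool) : eb U (vx g h) ≤ eb U g + eb U h := by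
  have hsub : U.filter (fun x => vx (vx g h) x ∉ U) ⊆
      (U.filter fun x => vx g x ∉ U) ∪ (U.filter fun x => vx h x ∉ U).image (vx g) := by
    intro x hx
    simp only [mem_filter] at hx
    obtain ⟨hxU, hxgh⟩ := hx
    by_cases hg : vx g x ∈ U
    · apply mem_union_right
      rw [mem_image]
      refine ⟨vx g x, ?_, vx_vx_cancel g x⟩
      rw [mem_filter]
      refine ⟨hg, ?_⟩
      have heq : vx h (vx g x) = vx (vx g h) x := by
        funext i; simp [vx, Bool.xor_assoc, Bool.xor_comm, Bool.xor_left_comm]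
      rw [heq]; exact hxgh
    · exact mem_union_left _ (mem_filter.mpr ⟨hxU, hg⟩)
  calc #(U.filter fun x => vx (vx g h) x ∉ U) ≤ _ := card_le_card hsub
    _ ≤ #(U.filter fun x => vx g x ∉ U) + #((U.filter fun x => vx h x ∉ U).image (vx g)) :=
        card_union_le _ _
    _ ≤ eb U g + eb U h := by
        refine Nat.add_le_add le_rfl ?_
        exact card_image_le

lemma sum_eb : ∑ g : Fin n → Bool, eb U g = #U * (2 ^ n - #U) := by
  have h1 : ∀ g, eb U g = ∑ x ∈ U, if vx g x ∉ U then 1 else 0 := by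
    intro g; rw [eb, card_filter]
  simp_rw [h1]
  rw [Finset.sum_comm]
  have h2 : ∀ x, ∑ g : Fin n → Bool, (if vx g x ∉ U then 1 else 0) = 2 ^ n - #U := by
    intro x
    rw [← card_filter]
    have : #(univ.filter fun g => vx g x ∉ U) = #Uᶜ := by
      apply card_bij (fun g _ => vx g x)
      · intro g hg; simp only [mem_filter] at hg; simpa using hg.2
      · intro g hg g' hg' hgg'
        have := congrArg (fun y => vx y x) hgg'
        simpa [vx_assoc, vx_self, vx_zero_right] using this
      · intro y hy
        refine ⟨vx y x, ?_, by rw [vx_assoc, vx_self, vx_zero_right]⟩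
        simp only [mem_filter, mem_univ, true_and]
        rw [vx_assoc, vx_self, vx_zero_right]
        simpa using hy
    rw [this, card_compl]
    congr 1
    simp [Fintype.card_fun]
  simp_rw [h2]
  rw [sum_const, smul_eq_mul]


def S (n d : ℕ) : Finset (Fin n → Bool) := univ.filter fun z => wt z = d

lemma mem_S {d : ℕ} {z : Fin n → Bool} : z ∈ S n d ↔ wt z = d := by simp [S]

def Bsum (U : Finset (Fin n → Bool)) (d : ℕ) : ℕ := ∑ z ∈ S n d, eb U z

def T (U : Finset (Fin n → Bool)) (u : Fin n → Bool) : ℕ :=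
  ∑ π : Equiv.Perm (Fin n), eb U (pact π u)

lemma sum_pact_S {d : ℕ} (π : Equiv.Perm (Fin n)) (f : (Fin n → Bool) → ℕ) :
    ∑ z ∈ S n d, f (pact π z) = ∑ z ∈ S n d, f z := by
  apply Finset.sum_bij (fun z _ => pact π z)
  · intro z hz; rw [mem_S] at *; rw [wt_pact]; exact hz
  · intro z hz z' hz' hzz'
    have := congrArg (pact π.symm) hzz'
    rw [pact_pact, pact_pact] at this
    have he : π.symm.trans π = Equiv.refl _ := by ext i; simp
    rw [he] at this
    exact this
  · intro z hz
    refine ⟨pact π.symm z, ?_, ?_⟩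
    · rw [mem_S] at *; rw [wt_pact]; exact hz
    · rw [pact_pact]
      have he : π.trans π.symm = Equiv.refl _ := by ext i; simp
      rw [he]; rfl
  · intro z hz; rfl

lemma T_invariant {d : ℕ} (U : Finset (Fin n → Bool)) {u u' : Fin n → Bool}
    (hu : wt u = d) (hu' : wt u' = d) : T U u = T U u' := by
  obtain ⟨σ, hσ⟩ := exists_perm_pact (hu.trans hu'.symm)
  rw [T, T, ← hσ]
  have hp : ∀ π : Equiv.Perm (Fin n), pact π (pact σ u) = pact (σ * π) u := by
    intro π; rw [pact_pact]; rfl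
  simp_rw [hp]
  exact (Equiv.sum_comp (Equiv.mulLeft σ) (fun ρ => eb U (pact ρ u))).symm

lemma S_mul_T {d : ℕ} (U : Finset (Fin n → Bool)) {u : Fin n → Bool} (hu : wt u = d) :
    #(S n d) * T U u = n.factorial * Bsum U d := by
  have h1 : #(S n d) * T U u = ∑ z ∈ S n d, T U z := by
    rw [sum_const_nat (m := T U u) (fun z hz => (T_invariant U (mem_S.mp hz) hu))]
  rw [h1]
  have h2 : ∑ z ∈ S n d, T U z = ∑ π : Equiv.Perm (Fin n), ∑ z ∈ S n d, eb U (pact π z) := by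
    rw [Finset.sum_comm]; rfl
  rw [h2]
  have h3 : ∀ π : Equiv.Perm (Fin n), ∑ z ∈ S n d, eb U (pact π z) = Bsum U d := by
    intro π; rw [Bsum]; exact sum_pact_S π (eb U)
  simp_rw [h3]
  rw [sum_const, smul_eq_mul, card_univ, Fintype.card_perm, Fintype.card_fin]

lemma T_zero (U : Finset (Fin n → Bool)) : T U (fun _ => false) = 0 := by
  rw [T]
  apply Finset.sum_eq_zero
  intro π _
  rw [pact_zero, eb_zero]

lemma T_subadd (U : Finset (Fin n → Bool)) (g h : Fin n → Bool) :
    T U (vx g h) ≤ T U g + T U h := by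
  rw [T, T, T, ← Finset.sum_add_distrib]
  apply Finset.sum_le_sum
  intro π _
  rw [pact_vx]
  exact eb_subadd U _ _

lemma T_lsum (U : Finset (Fin n → Bool)) (l : List (Fin n → Bool)) :
    T U (lsum l) ≤ (l.map (T U)).sum := by
  induction l with
  | nil => simp [T_zero]
  | cons z t ih =>
    rw [lsum_cons, List.map_cons, List.sum_cons]
    exact le_trans (T_subadd U z (lsum t)) (Nat.add_le_add le_rfl ih)

lemma list_aux {d : ℕ} (U : Finset (Fin n → Bool)) (l : List (Fin n → Bool))
    (hl : ∀ z ∈ l, wt z = d) :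
    #(S n d) * (l.map (T U)).sum = l.length * (n.factorial * Bsum U d) := by
  induction l with
  | nil => simp
  | cons z t ih =>
    rw [List.map_cons, List.sum_cons, Nat.mul_add, S_mul_T U (hl z (by simp)),
      ih (fun w hw => hl w (by simp [hw])), List.length_cons]
    ring

lemma card_S (d : ℕ) : #(S n d) = n.choose d := by
  have : #(S n d) = #(powersetCard d (univ : Finset (Fin n))) := by
    apply card_bij (fun z _ => supp z)
    · intro z hz
      rw [mem_powersetCard]
      exact ⟨subset_univ _, mem_S.mp hz⟩
    · intro z hz z' hz' h
      rw [← chi_supp z, ← chi_supp z', h]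
    · intro s hs
      rw [mem_powersetCard] at hs
      exact ⟨chi s, mem_S.mpr (by rw [wt_chi]; exact hs.2), supp_chi s⟩
  rw [this, card_powersetCard, card_univ, Fintype.card_fin]

lemma main_nat {d : ℕ} (hd : Odd d) (hdn : d < n) (U : Finset (Fin n → Bool))
    (hU2 : 2 * #U ≤ 2 ^ n) : #(S n d) * #U ≤ 2 * n * Bsum U d := by
  set B := Bsum U d with hB
  -- per-element bound
  have h1 : ∀ h : Fin n → Bool, #(S n d) * T U h ≤ n * (n.factorial * B) := by
    intro h
    obtain ⟨l, hld, hlsum, hllen⟩ := decomp hd hdn h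
    calc #(S n d) * T U h = #(S n d) * T U (lsum l) := by rw [hlsum]
      _ ≤ #(S n d) * (l.map (T U)).sum := Nat.mul_le_mul_left _ (T_lsum U l)
      _ = l.length * (n.factorial * B) := list_aux U l hld
      _ ≤ n * (n.factorial * B) := Nat.mul_le_mul_right _ hllen
  -- sum over all h
  have h2 : ∑ h : Fin n → Bool, T U h = n.factorial * ∑ g : Fin n → Bool, eb U g := by
    have : ∑ h : Fin n → Bool, T U h
        = ∑ π : Equiv.Perm (Fin n), ∑ h : Fin n → Bool, eb U (pact π h) := by
      rw [Finset.sum_comm]; rfl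
    rw [this]
    have h4 : ∀ π : Equiv.Perm (Fin n), ∑ h : Fin n → Bool, eb U (pact π h)
        = ∑ g : Fin n → Bool, eb U g := by
      intro π
      have := Equiv.sum_comp (pactE π) (eb U)
      simp_rw [pactE_apply] at this
      exact this
    simp_rw [h4]
    rw [sum_const, smul_eq_mul, card_univ, Fintype.card_perm, Fintype.card_fin]
  have h5 : #(S n d) * (n.factorial * ∑ g : Fin n → Bool, eb U g)
      ≤ 2 ^ n * (n * (n.factorial * B)) := by
    rw [← h2, Finset.mul_sum]
    calc ∑ h : Fin n → Bool, #(S n d) * T U h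
        ≤ ∑ _h : Fin n → Bool, n * (n.factorial * B) := Finset.sum_le_sum fun h _ => h1 h
      _ = 2 ^ n * (n * (n.factorial * B)) := by
          rw [sum_const, smul_eq_mul, card_univ, Fintype.card_fun, Fintype.card_bool,
            Fintype.card_fin]
  have h6 : 2 ^ n * #U ≤ 2 * ∑ g : Fin n → Bool, eb U g := by
    rw [sum_eb]
    have hle : #U ≤ 2 ^ n := by omega
    calc 2 ^ n * #U = #U * 2 ^ n := by ring
      _ ≤ #U * (2 * (2 ^ n - #U)) := Nat.mul_le_mul_left _ (by omega)
      _ = 2 * (#U * (2 ^ n - #U)) := by ring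
  -- combine
  have key : (2 ^ n * n.factorial) * (#(S n d) * #U)
      ≤ (2 ^ n * n.factorial) * (2 * n * B) := by
    calc (2 ^ n * n.factorial) * (#(S n d) * #U)
        = n.factorial * #(S n d) * (2 ^ n * #U) := by ring
      _ ≤ n.factorial * #(S n d) * (2 * ∑ g : Fin n → Bool, eb U g) :=
          Nat.mul_le_mul_left _ h6
      _ = 2 * (#(S n d) * (n.factorial * ∑ g : Fin n → Bool, eb U g)) := by ring
      _ ≤ 2 * (2 ^ n * (n * (n.factorial * B))) := Nat.mul_le_mul_left _ h5
      _ = (2 ^ n * n.factorial) * (2 * n * B) := by ring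
  exact Nat.le_of_mul_le_mul_left key (by positivity)

lemma wt_pos_exists {d : ℕ} (hd1 : 1 ≤ d) {z : Fin n → Bool} (hz : wt z = d) :
    ∃ i, z i = true := by
  have : 0 < #(supp z) := by rw [← wt] at *; omega
  obtain ⟨i, hi⟩ := card_pos.mp this
  exact ⟨i, (mem_filter.mp hi).2⟩

lemma hammingDist_eq_wt (x y : Fin n → Bool) : hammingDist x y = wt (vx x y) := by
  unfold hammingDist wt supp
  congr 1
  apply filter_congr
  intro i _
  cases hx : x i <;> cases hy : y i <;> simp [vx, hx, hy]

end QndProof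

open QndProof in
lemma pair_eq {n d : ℕ} (hd1 : 1 ≤ d) (U : Finset (Fin n → Bool)) :
    #(univ.filter (fun q : (Fin n → Bool) × (Fin n → Bool) =>
        (Qnd n d).Adj q.1 q.2 ∧ q.1 ∈ U ∧ q.2 ∉ U)) = Bsum U d := by
  rw [Bsum]
  rw [card_eq_sum_card_fiberwise (f := fun q => vx q.1 q.2) (t := S n d)]
  · apply Finset.sum_congr rfl
    intro z hz
    have hzd : wt z = d := mem_S.mp hz
    apply card_bij (fun q _ => q.1)
    · intro q hq
      simp only [mem_filter, mem_univ, true_and] at hq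
      obtain ⟨⟨⟨hne, hdist⟩, hq1, hq2⟩, hfib⟩ := hq
      rw [mem_filter]
      refine ⟨hq1, ?_⟩
      have : vx z q.1 = q.2 := by
        rw [← hfib, vx_comm q.1 q.2, vx_assoc, vx_self, vx_zero_right]
      rw [this]; exact hq2
    · intro q hq q' hq' hqq'
      simp only [mem_filter, mem_univ, true_and] at hq hq'
      have h2 : q.2 = q'.2 := by
        have e1 : vx z q.1 = q.2 := by
          rw [← hq.2, vx_comm q.1 q.2, vx_assoc, vx_self, vx_zero_right]
        have e2 : vx z q'.1 = q'.2 := by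
          rw [← hq'.2, vx_comm q'.1 q'.2, vx_assoc, vx_self, vx_zero_right]
        rw [← e1, ← e2, hqq']
      exact Prod.ext hqq' h2
    · intro x hx
      rw [mem_filter] at hx
      obtain ⟨hxU, hxz⟩ := hx
      refine ⟨(x, vx z x), ?_, rfl⟩
      simp only [mem_filter, mem_univ, true_and]
      obtain ⟨i, hi⟩ := wt_pos_exists hd1 (mem_S.mp hz)
      have hne : x ≠ vx z x := by
        intro hcon
        have h' := congrFun hcon i
        simp [vx, hi] at h'
      have hxzx : vx x (vx z x) = z := by
        rw [vx_comm z x, vx_vx_cancel]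
      refine ⟨⟨⟨hne, ?_⟩, hxU, hxz⟩, hxzx⟩
      rw [QndProof.hammingDist_eq_wt, hxzx, mem_S.mp hz]
  · intro q hq
    simp only [coe_filter, mem_filter, mem_univ, true_and, Set.mem_setOf_eq] at hq
    simp only [mem_coe]
    rw [mem_S, ← QndProof.hammingDist_eq_wt]
    exact hq.1.2

/-- For odd `d < n`, the edge-expansion of `Q_n^d` is at least `C(n,d)/(2n)`:
every set `U` of at most half the vertices has edge-boundary of size at least
`C(n,d)/(2n) · |U|`. -/
theorem stmt_7 (n d : ℕ) (hd : Odd d) (hdn : d < n)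
    (U : Finset (Fin n → Bool)) (hU : U.Nonempty) (hU2 : 2 * U.card ≤ 2 ^ n) :
    ((n.choose d : ℝ)) / (2 * n) ≤
      ((univ.filter (fun q : (Fin n → Bool) × (Fin n → Bool) =>
          (Qnd n d).Adj q.1 q.2 ∧ q.1 ∈ U ∧ q.2 ∉ U)).card : ℝ) / U.card := by
  have hd1 : 1 ≤ d := hd.pos
  have hn : 0 < n := lt_of_le_of_lt (Nat.zero_le d) hdn
  have hP := pair_eq (n := n) hd1 U
  have hkey : n.choose d * #U ≤ 2 * n * QndProof.Bsum U d := by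
    rw [← QndProof.card_S d]
    exact QndProof.main_nat hd hdn U hU2
  rw [hP]
  have hUpos : (0 : ℝ) < #U := by exact_mod_cast card_pos.mpr hU
  rw [div_le_div_iff₀ (by positivity) hUpos]
  have : (n.choose d * #U : ℝ) ≤ 2 * n * QndProof.Bsum U d := by exact_mod_cast hkey
  nlinarith [this]
end

section
/- Let V ⊆ {0,1}^n, let π_d : {0,1}^n → {0,1}^{n−d} be the projection onto the first n−d coordinates, W = π_d(V), and let G, H be the graphs of conv(V) and conv(W) respectively. Then for every A ⊆ V, |∂_G(A)| ≥ |∂_H(π_d(A))|. -/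
open Finset

def lin {m : ℕ} (a : Fin m → ℝ) (x : Fin m → Bool) : ℝ :=
  ∑ i, a i * (if x i then 1 else 0)

def IsPolytopeEdge {m : ℕ} (V : Set (Fin m → Bool)) (u v : Fin m → Bool) : Prop :=
  u ∈ V ∧ v ∈ V ∧ ∃ (a : Fin m → ℝ) (b : ℝ),
    lin a u = b ∧ lin a v = b ∧ ∀ w ∈ V, w ≠ u → w ≠ v → lin a w < b

/-- The number of edges of the graph of `conv(V)` with exactly one endpoint in `A`
(each such edge counted once, oriented from `A` to its complement). -/
noncomputable def edgeBd {m : ℕ} (V A : Set (Fin m → Bool)) : ℕ :=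
  Set.ncard {q : (Fin m → Bool) × (Fin m → Bool) |
    q.1 ∈ A ∧ q.2 ∉ A ∧ IsPolytopeEdge V q.1 q.2}

/-- Projection onto the first `n − d` coordinates. -/
def proj (n d : ℕ) (x : Fin n → Bool) : Fin (n - d) → Bool :=
  fun i => x (Fin.castLE (Nat.sub_le n d) i)

namespace StmtAux

variable {m : ℕ}

lemma lin_add_smul (a g : Fin m → ℝ) (N : ℝ) (x : Fin m → Bool) :
    lin (fun i => a i + N * g i) x = lin a x + N * lin g x := by
  rw [lin, lin, lin, Finset.mul_sum, ← Finset.sum_add_distrib]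
  exact Finset.sum_congr rfl fun i _ => by ring

/-- certificate that `u` is a vertex -/
def cert (u : Fin m → Bool) : Fin m → ℝ := fun i => if u i then 1 else -1

def ham (u x : Fin m → Bool) : ℕ := (univ.filter fun i => u i ≠ x i).card

lemma ham_pos {u x : Fin m → Bool} (h : x ≠ u) : 0 < ham u x := by
  rcases Function.ne_iff.1 h with ⟨i, hi⟩
  exact Finset.card_pos.2 ⟨i, by simp [ham, Ne.symm hi]⟩

lemma lin_cert_sub (u x : Fin m → Bool) :
    lin (cert u) u - lin (cert u) x = (ham u x : ℝ) := by
  classical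
  rw [lin, lin, ← Finset.sum_sub_distrib, ham]
  rw [← Finset.sum_boole (p := fun i => u i ≠ x i)]
  refine Finset.sum_congr rfl fun i _ => ?_
  rcases hu : u i <;> rcases hx : x i <;> simp [cert, hu, hx]


/-- edge functional separating `{u,v}` inside a suitable face -/
def efn (u v : Fin m → Bool) : Fin m → ℝ :=
  fun i => if u i = v i then (if u i then 1 else -1) else 0

lemma efn_uv (u v : Fin m → Bool) : lin (efn u v) u = lin (efn u v) v := by
  refine Finset.sum_congr rfl fun i _ => ?_
  rcases hu : u i <;> rcases hv : v i <;> simp [efn, hu, hv]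

lemma efn_diff (u v w : Fin m → Bool) :
    lin (efn u v) u - lin (efn u v) w
      = ((univ.filter fun i => u i = v i ∧ u i ≠ w i).card : ℝ) := by
  classical
  rw [lin, lin, ← Finset.sum_sub_distrib,
    ← Finset.sum_boole (p := fun i => u i = v i ∧ u i ≠ w i)]
  refine Finset.sum_congr rfl fun i _ => ?_
  rcases hu : u i <;> rcases hv : v i <;> rcases hw : w i <;> simp [efn, hu, hv, hw]

/-- the nearest point (in Hamming distance) to a vertex is an edge-neighbour -/
lemma exists_edge_nearest (F : Set (Fin m → Bool)) (u : Fin m → Bool) (hu : u ∈ F)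
    (w0 : Fin m → Bool) (hw0 : w0 ∈ F) (hne : w0 ≠ u) :
    ∃ v ∈ F, v ≠ u ∧ IsPolytopeEdge F u v := by
  classical
  obtain ⟨v, hv, hmin⟩ := Set.exists_min_image {x ∈ F | x ≠ u} (fun x => ham u x)
    (Set.toFinite _) ⟨w0, hw0, hne⟩
  refine ⟨v, hv.1, hv.2, hu, hv.1, efn u v, lin (efn u v) u, rfl, (efn_uv u v).symm,
    fun w hw hwu hwv => ?_⟩
  have hd := efn_diff u v w
  have hcard : 0 < (univ.filter fun i => u i = v i ∧ u i ≠ w i).card := by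
    rcases Nat.eq_zero_or_pos (univ.filter fun i => u i = v i ∧ u i ≠ w i).card with h0 | h
    · exfalso
      have hemp := Finset.card_eq_zero.1 h0
      -- D(u,w) ⊆ D(u,v)
      have hsub : (univ.filter fun i => u i ≠ w i) ⊆ (univ.filter fun i => u i ≠ v i) := by
        intro i hi
        simp only [Finset.mem_filter, Finset.mem_univ, true_and] at hi ⊢
        intro huv
        have : i ∈ (univ.filter fun i => u i = v i ∧ u i ≠ w i) :=
          Finset.mem_filter.2 ⟨Finset.mem_univ i, huv, hi⟩
        simp [hemp] at this
      have hle : (univ.filter fun i => u i ≠ v i).card ≤ (univ.filter fun i => u i ≠ w i).card :=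
        hmin w ⟨hw, hwu⟩
      have heq := Finset.eq_of_subset_of_card_le hsub hle
      apply hwv
      funext i
      by_cases hiw : u i ≠ w i
      · have hiv : u i ≠ v i := by
          have := heq ▸ (Finset.mem_filter.2 ⟨Finset.mem_univ i, hiw⟩)
          simpa using this
        rcases hu' : u i <;> rcases hw' : w i <;> rcases hv' : v i <;>
          simp_all
      · have hiv : ¬ (u i ≠ v i) := by
          intro hiv
          have := heq.symm ▸ (Finset.mem_filter.2 ⟨Finset.mem_univ i, hiv⟩)
          simp only [Finset.mem_filter] at this
          exact hiw this.2
        push_neg at hiw hiv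
        rw [← hiw, ← hiv]
    · exact h
  have : (0:ℝ) < (univ.filter fun i => u i = v i ∧ u i ≠ w i).card := by exact_mod_cast hcard
  linarith [hd]


/-- an edge of a face is an edge of the polytope -/
lemma face_lift (F : Set (Fin m → Bool)) (g : Fin m → ℝ) (c : ℝ)
    (hle : ∀ x ∈ F, lin g x ≤ c) (u v : Fin m → Bool)
    (h : IsPolytopeEdge {x ∈ F | lin g x = c} u v) :
    IsPolytopeEdge F u v := by
  classical
  obtain ⟨hu, hv, a, b, hau, hav, hstr⟩ := h
  set T : Finset (Fin m → Bool) :=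
    (Set.toFinite F).toFinset.filter (fun w => lin g w < c) with hT
  set N : ℝ := 1 + ∑ w ∈ T, max 0 ((lin a w - b) / (c - lin g w)) with hN
  have hN0 : 0 < N := by
    rw [hN]
    have : (0:ℝ) ≤ ∑ w ∈ T, max 0 ((lin a w - b) / (c - lin g w)) :=
      Finset.sum_nonneg fun w _ => le_max_left _ _
    linarith
  refine ⟨hu.1, hv.1, fun i => a i + N * g i, b + N * c, ?_, ?_, ?_⟩
  · rw [lin_add_smul, hau, hu.2]
  · rw [lin_add_smul, hav, hv.2]
  · intro w hw hwu hwv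
    rw [lin_add_smul]
    rcases lt_or_eq_of_le (hle w hw) with hlt | heq
    · have hwT : w ∈ T := by
        simp only [hT, Finset.mem_filter, Set.Finite.mem_toFinset]
        exact ⟨hw, hlt⟩
      have h1 : (lin a w - b) / (c - lin g w) ≤ N - 1 := by
        have := Finset.single_le_sum
          (f := fun w => max 0 ((lin a w - b) / (c - lin g w)))
          (fun w _ => le_max_left _ _) hwT
        calc (lin a w - b) / (c - lin g w) ≤ max 0 ((lin a w - b) / (c - lin g w)) :=
              le_max_right _ _
          _ ≤ N - 1 := by rw [hN]; linarith [this]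
      have h2 : lin a w - b < N * (c - lin g w) := by
        have hpos : 0 < c - lin g w := by linarith
        have := (div_le_iff₀ hpos).1 h1
        nlinarith
      linarith
    · have hwF : w ∈ {x ∈ F | lin g x = c} := ⟨hw, heq⟩
      have := hstr w hwF hwu hwv
      rw [heq]
      linarith


/-- a vertex which is not a maximiser of `l` has an edge-neighbour with larger `l`-value -/
lemma improve (F : Set (Fin m → Bool)) (u w0 : Fin m → Bool) (hu : u ∈ F) (hw0 : w0 ∈ F)
    (l : Fin m → ℝ) (hl : lin l u < lin l w0) :
    ∃ v ∈ F, v ≠ u ∧ IsPolytopeEdge F u v ∧ lin l u < lin l v := by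
  classical
  have hw0u : w0 ≠ u := fun h => by rw [h] at hl; exact lt_irrefl _ hl
  set r : (Fin m → Bool) → ℝ := fun w => (lin l w - lin l u) / (ham u w) with hr
  obtain ⟨w1, hw1, hmax⟩ := Set.exists_max_image {x ∈ F | x ≠ u} r (Set.toFinite _)
    ⟨w0, hw0, hw0u⟩
  set t : ℝ := r w1 with htdef
  have hham : ∀ x : Fin m → Bool, x ≠ u → (0:ℝ) < (ham u x : ℝ) := fun x hx => by
    exact_mod_cast ham_pos hx
  have ht : 0 < t := by
    have h0 : 0 < r w0 := div_pos (by linarith) (hham w0 hw0u)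
    exact lt_of_lt_of_le h0 (hmax w0 ⟨hw0, hw0u⟩)
  set g : Fin m → ℝ := fun i => l i + t * cert u i with hg
  -- key inequality
  have hkey : ∀ x ∈ F, x ≠ u → lin l x - lin l u ≤ t * (ham u x : ℝ) ∧
      (lin g x = lin g u ↔ lin l x - lin l u = t * (ham u x : ℝ)) := by
    intro x hx hxu
    have h1 : r x ≤ t := hmax x ⟨hx, hxu⟩
    have h2 : lin l x - lin l u ≤ t * (ham u x : ℝ) := by
      have := (div_le_iff₀ (hham x hxu)).1 h1
      linarith
    refine ⟨h2, ?_⟩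
    have h3 : lin g x = lin l x + t * lin (cert u) x := lin_add_smul l (cert u) t x
    have h4 : lin g u = lin l u + t * lin (cert u) u := lin_add_smul l (cert u) t u
    have h5 := lin_cert_sub u x
    constructor
    · intro h; nlinarith [h3, h4, h5]
    · intro h; nlinarith [h3, h4, h5]
  have hgle : ∀ x ∈ F, lin g x ≤ lin g u := by
    intro x hx
    by_cases hxu : x = u
    · rw [hxu]
    · obtain ⟨h2, _⟩ := hkey x hx hxu
      have h3 : lin g x = lin l x + t * lin (cert u) x := lin_add_smul l (cert u) t x
      have h4 : lin g u = lin l u + t * lin (cert u) u := lin_add_smul l (cert u) t u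
      have h5 := lin_cert_sub u x
      nlinarith
  -- w1 is in the face
  have hw1face : lin g w1 = lin g u := by
    refine ((hkey w1 hw1.1 hw1.2).2).2 ?_
    rw [htdef, hr]
    exact (div_mul_cancel₀ _ (ne_of_gt (hham w1 hw1.2))).symm
  obtain ⟨v, hvM, hvu, hedge⟩ := exists_edge_nearest {x ∈ F | lin g x = lin g u} u
    ⟨hu, rfl⟩ w1 ⟨hw1.1, hw1face⟩ hw1.2
  refine ⟨v, hvM.1, hvu, face_lift F g (lin g u) hgle u v hedge, ?_⟩
  have := ((hkey v hvM.1 hvu).2).1 hvM.2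
  have hp : 0 < t * (ham u v : ℝ) := mul_pos ht (hham v hvu)
  linarith


def liftF (n d : ℕ) (a : Fin (n - d) → ℝ) : Fin n → ℝ :=
  fun i => if h : i.val < n - d then a ⟨i.val, h⟩ else 0

lemma lin_liftF (n d : ℕ) (a : Fin (n - d) → ℝ) (x : Fin n → Bool) :
    lin (liftF n d a) x = lin a (proj n d x) := by
  classical
  set Fn : ℕ → ℝ := fun j => if h : j < n - d then
    a ⟨j, h⟩ * (if proj n d x ⟨j, h⟩ then (1:ℝ) else 0) else 0 with hFn
  have step1 : lin (liftF n d a) x = ∑ j ∈ Finset.range n, Fn j := by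
    rw [lin, ← Fin.sum_univ_eq_sum_range Fn n]
    refine Finset.sum_congr rfl fun k _ => ?_
    by_cases h : k.val < n - d
    · have hk : Fin.castLE (Nat.sub_le n d) (⟨k.val, h⟩ : Fin (n - d)) = k := rfl
      simp [hFn, liftF, h, proj, hk]
      by_cases hxk : x k <;> simp [hxk]
    · simp [hFn, liftF, h]
  have step2 : ∑ j ∈ Finset.range n, Fn j = ∑ j ∈ Finset.range (n - d), Fn j := by
    refine (Finset.sum_subset (Finset.range_subset_range.2 (Nat.sub_le n d)) ?_).symm
    intro j _ hj
    have hj' : ¬ j < n - d := by simpa using hj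
    simp [hFn, hj']
  have step3 : ∑ j ∈ Finset.range (n - d), Fn j = lin a (proj n d x) := by
    rw [← Fin.sum_univ_eq_sum_range Fn (n - d), lin]
    refine Finset.sum_congr rfl fun k _ => ?_
    simp [hFn, k.isLt]
  rw [step1, step2, step3]


lemma lin_single (n d : ℕ) (j : Fin (n - d)) (y : Fin (n - d) → Bool) (r : ℝ) :
    lin (fun i => if i = j then r else 0) y = r * (if y j then 1 else 0) := by
  rw [lin, Finset.sum_eq_single j]
  · simp
  · intro i _ hij; simp [hij]
  · intro h; exact absurd (Finset.mem_univ j) h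

lemma key (n d : ℕ) (V A : Set (Fin n → Bool)) (hA : A ⊆ V) (u' v' : Fin (n - d) → Bool)
    (h1 : u' ∈ proj n d '' A) (h2 : v' ∉ proj n d '' A)
    (he : IsPolytopeEdge (proj n d '' V) u' v') :
    ∃ p : (Fin n → Bool) × (Fin n → Bool),
      p.1 ∈ A ∧ p.2 ∉ A ∧ IsPolytopeEdge V p.1 p.2 ∧
        proj n d p.1 = u' ∧ proj n d p.2 = v' := by
  classical
  obtain ⟨huV', hvV', a', b', hau', hav', hstr'⟩ := he
  obtain ⟨u, huA, hup⟩ := h1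
  obtain ⟨w0, hw0V, hw0p⟩ := hvV'
  have hne : u' ≠ v' := fun h => h2 (h ▸ ⟨u, huA, hup⟩)
  have hb : ∀ x ∈ V, lin (liftF n d a') x ≤ b' := by
    intro x hx
    rw [lin_liftF]
    by_cases h : proj n d x = u'
    · rw [h, hau']
    · by_cases h' : proj n d x = v'
      · rw [h', hav']
      · exact le_of_lt (hstr' _ ⟨x, hx, rfl⟩ h h')
  set Fc : Set (Fin n → Bool) := {x ∈ V | lin (liftF n d a') x = b'} with hFc
  have huF : u ∈ Fc := ⟨hA huA, by rw [lin_liftF, hup, hau']⟩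
  have hw0F : w0 ∈ Fc := ⟨hw0V, by rw [lin_liftF, hw0p, hav']⟩
  have hFmem : ∀ x ∈ Fc, proj n d x = u' ∨ proj n d x = v' := by
    intro x hx
    by_contra hc
    push_neg at hc
    have hlt := hstr' (proj n d x) ⟨x, hx.1, rfl⟩ hc.1 hc.2
    rw [← lin_liftF] at hlt
    rw [hx.2] at hlt
    exact lt_irrefl _ hlt
  obtain ⟨j, hj⟩ := Function.ne_iff.1 hne
  set rj : ℝ := if v' j then 1 else -1 with hrj
  set c' : Fin (n - d) → ℝ := fun i => if i = j then rj else 0 with hc'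
  have hcu : lin c' u' < lin c' v' := by
    rw [hc', lin_single, lin_single]
    rcases hv : v' j
    · rw [hv] at hj
      have hu' : u' j = true := by
        rcases h : u' j
        · exact absurd h hj
        · rfl
      simp [hrj, hv, hu']
    · rw [hv] at hj
      have hu' : u' j = false := by
        rcases h : u' j
        · rfl
        · exact absurd h hj
      simp [hrj, hv, hu']
  have hl : lin (liftF n d c') u < lin (liftF n d c') w0 := by
    rw [lin_liftF, lin_liftF, hup, hw0p]; exact hcu
  obtain ⟨v, hvF, hvu, hedgeF, hlv⟩ := improve Fc u w0 huF hw0F (liftF n d c') hl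
  have hpv : proj n d v = v' := by
    rcases hFmem v hvF with h | h
    · exfalso
      rw [lin_liftF, lin_liftF, hup, h] at hlv
      exact lt_irrefl _ hlv
    · exact h
  have hvA : v ∉ A := fun h => h2 ⟨v, h, hpv⟩
  exact ⟨(u, v), huA, hvA, face_lift V (liftF n d a') b' hb u v hedgeF, hup, hpv⟩

end StmtAux

/-- Lemma 2.11 (projection lemma, Ferber–Krivelevich–Sales–Samotij): for `A ⊆ V`,
the edge-boundary of `A` in the graph of `conv(V)` is at least the edge-boundary of
`π_d(A)` in the graph of `conv(π_d(V))`. -/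
theorem stmt_11 (n d : ℕ) (V A : Set (Fin n → Bool)) (hA : A ⊆ V) :
    edgeBd (proj n d '' V) (proj n d '' A) ≤ edgeBd V A := by
  classical
  rw [edgeBd, edgeBd]
  set S' : Set ((Fin (n - d) → Bool) × (Fin (n - d) → Bool)) :=
    {q | q.1 ∈ proj n d '' A ∧ q.2 ∉ proj n d '' A ∧
      IsPolytopeEdge (proj n d '' V) q.1 q.2} with hS'
  set S : Set ((Fin n → Bool) × (Fin n → Bool)) :=
    {q | q.1 ∈ A ∧ q.2 ∉ A ∧ IsPolytopeEdge V q.1 q.2} with hS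
  have hex : ∀ q' ∈ S', ∃ p : (Fin n → Bool) × (Fin n → Bool),
      p ∈ S ∧ proj n d p.1 = q'.1 ∧ proj n d p.2 = q'.2 := by
    intro q' hq'
    obtain ⟨p, h1, h2, h3, h4, h5⟩ :=
      StmtAux.key n d V A hA q'.1 q'.2 hq'.1 hq'.2.1 hq'.2.2
    exact ⟨p, ⟨h1, h2, h3⟩, h4, h5⟩
  set f : (Fin (n - d) → Bool) × (Fin (n - d) → Bool) →
      (Fin n → Bool) × (Fin n → Bool) :=
    fun q' => if h : q' ∈ S' then (hex q' h).choose
      else ((fun _ => false), (fun _ => false)) with hf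
  have hspec : ∀ q' ∈ S', f q' ∈ S ∧ proj n d (f q').1 = q'.1 ∧
      proj n d (f q').2 = q'.2 := by
    intro q' h
    rw [hf]
    simp only [dif_pos h]
    exact (hex q' h).choose_spec
  refine Set.ncard_le_ncard_of_injOn f (fun q' h => (hspec q' h).1) ?_ (Set.toFinite _)
  intro q1 h1 q2 h2 heq
  obtain ⟨_, e11, e12⟩ := hspec q1 h1
  obtain ⟨_, e21, e22⟩ := hspec q2 h2
  have : (q1.1, q1.2) = (q2.1, q2.2) := by
    rw [← e11, ← e12, ← e21, ← e22, heq]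
  simpa using this
end

section
/- Suppose G is the graph of conv(V), H the graph of conv(π_d(V)), and assume: h(H) ≥ η, |W| ≥ 0.9|V| where W = π_d(V), and every fiber of π_d restricted to V has size less than n. Then h(G) ≥ η/n. -/
open Finset

lemma binary_inj {m : ℕ} : Function.Injective
    (fun w : Fin m → Bool => ∑ j : Fin m, (if w j then 1 else 0) * 2 ^ (j : ℕ)) := by
  have h1 : Function.Injective (fun b : Bool => (if b then 1 else 0 : Fin 2)) := by
    intro a b; cases a <;> cases b <;> simp
  intro w w' h
  have hw : ∀ v : Fin m → Bool,
      ((finFunctionFinEquiv (fun j => if v j then 1 else 0 : Fin m → Fin 2)) : ℕ)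
        = ∑ j : Fin m, (if v j then 1 else 0) * 2 ^ (j : ℕ) := by
    intro v
    rw [finFunctionFinEquiv_apply]
    congr 1; funext j; by_cases hj : v j <;> simp [hj]
  have : (fun j => if w j then 1 else 0 : Fin m → Fin 2)
      = (fun j => if w' j then 1 else 0) := by
    apply finFunctionFinEquiv.injective
    apply Fin.val_injective
    rw [hw, hw]; exact h
  funext j
  exact h1 (congrFun this j)

lemma exists_edge_diff {m : ℕ} (F : Set (Fin m → Bool)) (p : Fin m → Bool)
    (hp : p ∈ F) (i : Fin m) (hne : ∃ w ∈ F, w i ≠ p i) :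
    ∃ q ∈ F, q i ≠ p i ∧ IsPolytopeEdge F p q := by
  classical
  set δ : ℝ := 1 / 2 ^ m with hδdef
  have hδpos : 0 < δ := by positivity
  set N : (Fin m → Bool) → ℕ := fun w => ∑ j : Fin m, (if w j then 1 else 0) * 2 ^ (j : ℕ)
    with hNdef
  set Z : (Fin m → Bool) → ℤ :=
    fun w => ∑ j : Fin m, (if w j then (if p j then 1 else -1) else 0) with hZdef
  set c : Fin m → ℝ := fun j => (if p j then 1 else -1) + δ * 2 ^ (j : ℕ) with hcdef
  have hdecomp : ∀ w, lin c w = (Z w : ℝ) + δ * (N w : ℝ) := by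
    intro w
    simp only [lin, hZdef, hNdef, hcdef]
    push_cast
    rw [Finset.mul_sum, ← Finset.sum_add_distrib]
    congr 1; funext j
    by_cases hw : w j <;> by_cases hpj : p j <;> simp [hw, hpj] <;> ring
  have hNbound : ∀ w, (N w : ℝ) ≤ 2 ^ m - 1 := by
    intro w
    have hNw : (N w : ℝ) = ∑ j : Fin m, (if w j then (1:ℝ) else 0) * 2 ^ (j : ℕ) := by
      rw [hNdef]; push_cast; rfl
    rw [hNw]
    have h2 : ∑ j : Fin m, (if w j then (1:ℝ) else 0) * 2 ^ (j : ℕ)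
        ≤ ∑ j : Fin m, (2:ℝ) ^ (j : ℕ) := by
      apply Finset.sum_le_sum
      intro j _
      by_cases hw : w j <;> simp [hw] <;> positivity
    refine h2.trans ?_
    rw [Fin.sum_univ_eq_sum_range (fun k => (2:ℝ) ^ k)]
    rw [geom_sum_eq (by norm_num)]
    norm_num
  have hδsmall : δ * (2 ^ m - 1) < 1 := by
    rw [hδdef]
    rw [div_mul_eq_mul_div, one_mul, div_lt_one (by positivity)]
    norm_num
  have hZterm : ∀ w, (Z p : ℝ) - Z w
      = ∑ j : Fin m, (if p j = w j then (0:ℝ) else 1) := by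
    intro w
    simp only [hZdef]
    push_cast
    rw [← Finset.sum_sub_distrib]
    congr 1; funext j
    by_cases hw : w j <;> by_cases hpj : p j <;> simp [hw, hpj]
  have hham : ∀ w, w ≠ p → (Z w : ℝ) + 1 ≤ (Z p : ℝ) := by
    intro w hw
    have hj : ∃ j, p j ≠ w j := by
      by_contra h
      push_neg at h
      exact hw (funext fun j => (h j).symm)
    obtain ⟨j₀, hj₀⟩ := hj
    have : (1:ℝ) ≤ ∑ j : Fin m, (if p j = w j then (0:ℝ) else 1) := by
      have := Finset.single_le_sum (f := fun j : Fin m => (if p j = w j then (0:ℝ) else 1))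
        (fun j _ => by by_cases h : p j = w j <;> simp [h]) (Finset.mem_univ j₀)
      simpa [hj₀] using this
    have h2 := hZterm w
    linarith
  have hvert : ∀ w, w ≠ p → lin c w < lin c p := by
    intro w hw
    rw [hdecomp, hdecomp]
    have h1 := hham w hw
    have h2 := hNbound w
    have h3 : (0:ℝ) ≤ (N p : ℝ) := by positivity
    nlinarith [hδpos]
  have hinj : ∀ w w', lin c w = lin c w' → w = w' := by
    intro w w' h
    rw [hdecomp, hdecomp] at h
    have hZ : ((Z w - Z w' : ℤ) : ℝ) = δ * ((N w' : ℝ) - (N w : ℝ)) := by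
      push_cast; linarith
    have habs : |((Z w - Z w' : ℤ) : ℝ)| < 1 := by
      rw [hZ, abs_mul, abs_of_pos hδpos]
      have h1 : |(N w' : ℝ) - (N w : ℝ)| ≤ 2 ^ m - 1 := by
        rw [abs_sub_le_iff]
        constructor
        · have := hNbound w'; have : (0:ℝ) ≤ (N w : ℝ) := by positivity
          have := hNbound w'; linarith
        · have := hNbound w; have : (0:ℝ) ≤ (N w' : ℝ) := by positivity
          have := hNbound w; linarith
      calc δ * |(N w' : ℝ) - (N w : ℝ)| ≤ δ * (2 ^ m - 1) := by
            apply mul_le_mul_of_nonneg_left h1 hδpos.le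
        _ < 1 := hδsmall
    have hZeq : Z w = Z w' := by
      have h2 : |Z w - Z w'| < 1 := by exact_mod_cast habs
      have h3 := abs_lt.mp h2
      omega
    have hNeq : (N w : ℝ) = (N w' : ℝ) := by
      rw [hZeq] at hZ
      simp at hZ
      rcases hZ with h | h
      · exact absurd h hδpos.ne'
      · linarith
    exact binary_inj (by exact_mod_cast hNeq)
  -- pick q maximizing lin c over X₁
  set X₁ : Set (Fin m → Bool) := {w ∈ F | w i ≠ p i} with hX₁def
  have hX₁ne : X₁.Nonempty := by
    obtain ⟨w, hwF, hwi⟩ := hne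
    exact ⟨w, hwF, hwi⟩
  obtain ⟨q, hqX, hqmax⟩ := Set.exists_max_image X₁ (lin c) (Set.toFinite X₁) hX₁ne
  obtain ⟨hqF, hqi⟩ := hqX
  refine ⟨q, hqF, hqi, hp, hqF, ?_⟩
  set τ : ℝ := (if p i then (1:ℝ) else -1) * (lin c q - lin c p) with hτdef
  set a : Fin m → ℝ := fun j => c j + (if j = i then τ else 0) with hadef
  have hlina : ∀ w, lin a w = lin c w + τ * (if w i then 1 else 0) := by
    intro w
    simp only [lin, hadef, add_mul, Finset.sum_add_distrib]
    congr 1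
    rw [Finset.sum_eq_single i]
    · simp
    · intro b _ hb; simp [hb]
    · intro h; exact absurd (Finset.mem_univ i) h
  have hlinq : lin a q = lin a p := by
    rw [hlina, hlina]
    cases hpi : p i with
    | false =>
        have hqi' : q i = true := by
          cases hq2 : q i
          · exact absurd (hq2.trans hpi.symm) hqi
          · rfl
        rw [hτdef, hpi, hqi']
        simp only [if_false, if_true, Bool.false_eq_true]
        ring
    | true =>
        have hqi' : q i = false := by
          cases hq2 : q i
          · rfl
          · exact absurd (hq2.trans hpi.symm) hqi
        rw [hτdef, hpi, hqi']
        simp only [if_true, Bool.false_eq_true, if_false]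
        ring
  refine ⟨a, lin a p, rfl, hlinq, ?_⟩
  intro w hwF hwp hwq
  by_cases hwi : w i = p i
  · rw [hlina, hlina, hwi]
    have := hvert w hwp
    linarith
  · have hwq' : w i = q i := by
      have hb : ∀ x y z : Bool, x ≠ z → y ≠ z → x = y := by decide
      exact hb _ _ _ hwi hqi
    have hwX : w ∈ X₁ := ⟨hwF, hwi⟩
    have hle : lin c w ≤ lin c q := hqmax w hwX
    have hlt : lin c w < lin c q := by
      rcases lt_or_eq_of_le hle with h | h
      · exact h
      · exact absurd (hinj w q h) hwq
    calc lin a w = lin c w + τ * (if q i then 1 else 0) := by rw [hlina, hwq']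
      _ < lin c q + τ * (if q i then 1 else 0) := by linarith
      _ = lin a q := (hlina q).symm
      _ = lin a p := hlinq

lemma lin_add_smul {m : ℕ} (c dd : Fin m → ℝ) (M : ℝ) (w : Fin m → Bool) :
    lin (fun j => c j + M * dd j) w = lin c w + M * lin dd w := by
  simp only [lin, add_mul, Finset.sum_add_distrib, Finset.mul_sum, mul_assoc]

lemma edge_of_face {m : ℕ} (V F : Set (Fin m → Bool)) (abar : Fin m → ℝ) (b : ℝ)
    (hFV : F ⊆ V) (hchar : ∀ w ∈ V, lin abar w ≤ b ∧ (lin abar w = b ↔ w ∈ F))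
    (p q : Fin m → Bool) (h : IsPolytopeEdge F p q) : IsPolytopeEdge V p q := by
  obtain ⟨hpF, hqF, c, e, hcp, hcq, hlt⟩ := h
  have hfin : ((fun w => (lin c w - e) / (b - lin abar w)) '' (V \ F)).Finite :=
    Set.Finite.image _ (Set.toFinite _)
  obtain ⟨M₀, hM₀⟩ := hfin.bddAbove
  set M : ℝ := max M₀ 0 + 1 with hMdef
  have hMpos : 0 < M := by
    have : (0:ℝ) ≤ max M₀ 0 := le_max_right _ _
    linarith
  have hMbig : ∀ w ∈ V \ F, lin c w - e < M * (b - lin abar w) := by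
    intro w hw
    have hlt' : lin abar w < b := by
      have h1 := (hchar w hw.1).1
      have h2 := (hchar w hw.1).2
      rcases lt_or_eq_of_le h1 with h | h
      · exact h
      · exact absurd (h2.mp h) hw.2
    have hpos : 0 < b - lin abar w := by linarith
    have hub : (lin c w - e) / (b - lin abar w) ≤ M₀ :=
      hM₀ (Set.mem_image_of_mem _ hw)
    have : (lin c w - e) / (b - lin abar w) < M := by
      have : M₀ ≤ max M₀ 0 := le_max_left _ _
      linarith
    calc lin c w - e = ((lin c w - e) / (b - lin abar w)) * (b - lin abar w) := by
          field_simp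
      _ < M * (b - lin abar w) := by
          apply mul_lt_mul_of_pos_right this hpos
  have habarp : lin abar p = b := (hchar p (hFV hpF)).2.mpr hpF
  have habarq : lin abar q = b := (hchar q (hFV hqF)).2.mpr hqF
  refine ⟨hFV hpF, hFV hqF, fun j => c j + M * abar j, e + M * b, ?_, ?_, ?_⟩
  · rw [lin_add_smul, hcp, habarp]
  · rw [lin_add_smul, hcq, habarq]
  · intro w hwV hwp hwq
    rw [lin_add_smul]
    by_cases hwF : w ∈ F
    · have h1 := hlt w hwF hwp hwq
      have h2 : lin abar w = b := (hchar w hwV).2.mpr hwF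
      rw [h2]; linarith
    · have := hMbig w ⟨hwV, hwF⟩
      nlinarith

lemma edge_symm {m : ℕ} {V : Set (Fin m → Bool)} {u v : Fin m → Bool}
    (h : IsPolytopeEdge V u v) : IsPolytopeEdge V v u := by
  obtain ⟨hu, hv, a, b, h1, h2, h3⟩ := h
  exact ⟨hv, hu, a, b, h2, h1, fun w hw hwv hwu => h3 w hw hwu hwv⟩

lemma lin_ext (n d : ℕ) (a' : Fin (n - d) → ℝ) (w : Fin n → Bool) :
    lin (fun j : Fin n => if h : (j : ℕ) < n - d then a' ⟨j, h⟩ else 0) w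
      = lin a' (proj n d w) := by
  classical
  rw [lin, lin]
  symm
  calc ∑ i : Fin (n - d), a' i * (if proj n d w i then 1 else 0)
      = ∑ j ∈ Finset.univ.map (Fin.castLEEmb (Nat.sub_le n d)),
          (if h : (j : ℕ) < n - d then a' ⟨j, h⟩ else 0) * (if w j then 1 else 0) := by
        rw [Finset.sum_map]
        apply Finset.sum_congr rfl
        intro i _
        have hlt : ((Fin.castLEEmb (Nat.sub_le n d) i : Fin n) : ℕ) < n - d := i.isLt
        rw [dif_pos hlt]
        rfl
    _ = ∑ j : Fin n,
          (if h : (j : ℕ) < n - d then a' ⟨j, h⟩ else 0) * (if w j then 1 else 0) := by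
        apply Finset.sum_subset (Finset.subset_univ _)
        intro j _ hj
        have : ¬ ((j : ℕ) < n - d) := by
          intro hlt
          apply hj
          rw [Finset.mem_map]
          exact ⟨⟨(j : ℕ), hlt⟩, Finset.mem_univ _, by ext; rfl⟩
        rw [dif_neg this, zero_mul]

lemma exists_lift {n d : ℕ} (V A : Set (Fin n → Bool)) (hA : A ⊆ V)
    (u' v' : Fin (n - d) → Bool)
    (hu : u' ∈ proj n d '' A) (hv : v' ∉ proj n d '' A)
    (hedge : IsPolytopeEdge (proj n d '' V) u' v') :
    ∃ p q : Fin n → Bool, p ∈ A ∧ q ∉ A ∧ IsPolytopeEdge V p q ∧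
      proj n d p = u' ∧ proj n d q = v' := by
  classical
  obtain ⟨huW, hvW, a', b, hbu, hbv, hblt⟩ := hedge
  have hne : u' ≠ v' := fun h => hv (h ▸ hu)
  set abar : Fin n → ℝ := fun j => if h : (j : ℕ) < n - d then a' ⟨j, h⟩ else 0
    with habar
  set F : Set (Fin n → Bool) := {w ∈ V | proj n d w = u' ∨ proj n d w = v'} with hFdef
  have hFV : F ⊆ V := fun w hw => hw.1
  have hchar : ∀ w ∈ V, lin abar w ≤ b ∧ (lin abar w = b ↔ w ∈ F) := by
    intro w hwV
    have hl : lin abar w = lin a' (proj n d w) := lin_ext n d a' w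
    by_cases h1 : proj n d w = u'
    · rw [hl, h1, hbu]
      exact ⟨le_refl _, by simp [hFdef, hwV, h1]⟩
    · by_cases h2 : proj n d w = v'
      · rw [hl, h2, hbv]
        exact ⟨le_refl _, by simp [hFdef, hwV, h2]⟩
      · have hlt := hblt (proj n d w) (Set.mem_image_of_mem _ hwV) h1 h2
        rw [hl]
        refine ⟨hlt.le, ?_⟩
        constructor
        · intro h; exact absurd h hlt.ne
        · intro h
          rcases h.2 with h | h
          · exact absurd h h1
          · exact absurd h h2
  obtain ⟨p, hpA, hpu⟩ := hu
  have hpF : p ∈ F := ⟨hA hpA, Or.inl hpu⟩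
  obtain ⟨i, hi⟩ := Function.ne_iff.mp hne
  obtain ⟨q₀, hq₀V, hq₀v⟩ := hvW
  have hq₀F : q₀ ∈ F := ⟨hq₀V, Or.inr hq₀v⟩
  have hq₀i : q₀ (Fin.castLE (Nat.sub_le n d) i) ≠ p (Fin.castLE (Nat.sub_le n d) i) := by
    have h1 : q₀ (Fin.castLE (Nat.sub_le n d) i) = v' i := by
      rw [← hq₀v]; rfl
    have h2 : p (Fin.castLE (Nat.sub_le n d) i) = u' i := by
      rw [← hpu]; rfl
    rw [h1, h2]
    exact fun h => hi h.symm
  obtain ⟨q, hqF, hqi, hedgeF⟩ :=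
    exists_edge_diff F p hpF (Fin.castLE (Nat.sub_le n d) i) ⟨q₀, hq₀F, hq₀i⟩
  have hqv : proj n d q = v' := by
    rcases hqF.2 with h | h
    · exfalso
      apply hqi
      have h1 : q (Fin.castLE (Nat.sub_le n d) i) = u' i := by rw [← h]; rfl
      have h2 : p (Fin.castLE (Nat.sub_le n d) i) = u' i := by rw [← hpu]; rfl
      rw [h1, h2]
    · exact h
  have hqA : q ∉ A := fun hqA => hv ⟨q, hqA, hqv⟩
  exact ⟨p, q, hpA, hqA, edge_of_face V F abar b hFV hchar p q hedgeF, hpu, hqv⟩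

lemma edgeBd_proj_le {n d : ℕ} (V A : Set (Fin n → Bool)) (hA : A ⊆ V) :
    edgeBd (proj n d '' V) (proj n d '' A) ≤ edgeBd V A := by
  classical
  set SH := {q : (Fin (n - d) → Bool) × (Fin (n - d) → Bool) |
    q.1 ∈ proj n d '' A ∧ q.2 ∉ proj n d '' A ∧ IsPolytopeEdge (proj n d '' V) q.1 q.2}
    with hSH
  set SG := {q : (Fin n → Bool) × (Fin n → Bool) |
    q.1 ∈ A ∧ q.2 ∉ A ∧ IsPolytopeEdge V q.1 q.2} with hSG
  have key : ∀ e : (Fin (n - d) → Bool) × (Fin (n - d) → Bool), e ∈ SH →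
      ∃ e' : (Fin n → Bool) × (Fin n → Bool), e' ∈ SG ∧
        proj n d e'.1 = e.1 ∧ proj n d e'.2 = e.2 := by
    rintro ⟨u', v'⟩ ⟨h1, h2, h3⟩
    obtain ⟨p, q, hp, hq, hedge, hpu, hqv⟩ := exists_lift V A hA u' v' h1 h2 h3
    exact ⟨(p, q), ⟨hp, hq, hedge⟩, hpu, hqv⟩
  choose! f hf1 hf2 hf3 using key
  apply Set.ncard_le_ncard_of_injOn f (fun e he => hf1 e he) _ (Set.toFinite SG)
  intro e he e' he' hee
  have h1 : e.1 = e'.1 := by rw [← hf2 e he, ← hf2 e' he', hee]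
  have h2 : e.2 = e'.2 := by rw [← hf3 e he, ← hf3 e' he', hee]
  exact Prod.ext h1 h2

lemma edgeBd_compl {m : ℕ} (W B : Set (Fin m → Bool)) (hB : B ⊆ W) :
    edgeBd W B = edgeBd W (W \ B) := by
  classical
  set S1 := {q : (Fin m → Bool) × (Fin m → Bool) |
    q.1 ∈ B ∧ q.2 ∉ B ∧ IsPolytopeEdge W q.1 q.2} with hS1
  set S2 := {q : (Fin m → Bool) × (Fin m → Bool) |
    q.1 ∈ W \ B ∧ q.2 ∉ W \ B ∧ IsPolytopeEdge W q.1 q.2} with hS2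
  have himg : S2 = Prod.swap '' S1 := by
    ext ⟨x, y⟩
    constructor
    · rintro ⟨hx, hy, he⟩
      have hyW : y ∈ W := he.2.1
      have hyB : y ∈ B := by
        by_contra h
        exact hy ⟨hyW, h⟩
      exact ⟨(y, x), ⟨hyB, hx.2, edge_symm he⟩, rfl⟩
    · rintro ⟨⟨u, v⟩, ⟨hu, hv, he⟩, hswap⟩
      have h1 : v = x := congrArg Prod.fst hswap
      have h2 : u = y := congrArg Prod.snd hswap
      subst h1; subst h2
      have hvW : v ∈ W := he.2.1
      exact ⟨⟨hvW, hv⟩, fun h => h.2 hu, edge_symm he⟩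
  show S1.ncard = S2.ncard
  rw [himg, Set.ncard_image_of_injective _ Prod.swap_injective]

lemma card_le_mul_fibers {n d : ℕ} (V A : Set (Fin n → Bool)) (hA : A ⊆ V) (n' : ℕ)
    (hfiber : ∀ w : Fin (n - d) → Bool, ({x ∈ V | proj n d x = w}).ncard ≤ n') :
    A.ncard ≤ n' * (proj n d '' A).ncard := by
  classical
  have hAfin : A.Finite := Set.toFinite A
  have hBfin : (proj n d '' A).Finite := Set.toFinite _
  rw [Set.ncard_eq_toFinset_card A hAfin, Set.ncard_eq_toFinset_card _ hBfin]
  rw [Finset.card_eq_sum_card_fiberwise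
    (f := proj n d) (t := hBfin.toFinset)
    (fun x hx => by
      rw [Set.Finite.coe_toFinset] at hx ⊢
      exact Set.mem_image_of_mem _ hx)]
  calc ∑ b ∈ hBfin.toFinset, (hAfin.toFinset.filter fun x => proj n d x = b).card
      ≤ ∑ _b ∈ hBfin.toFinset, n' := by
        apply Finset.sum_le_sum
        intro b _
        have hsub : (hAfin.toFinset.filter fun x => proj n d x = b)
            ⊆ (Set.toFinite {x ∈ V | proj n d x = b}).toFinset := by
          intro x hx
          rw [Finset.mem_filter, Set.Finite.mem_toFinset] at hx
          rw [Set.Finite.mem_toFinset]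
          exact ⟨hA hx.1, hx.2⟩
        have := Finset.card_le_card hsub
        rw [← Set.ncard_eq_toFinset_card _ (Set.toFinite {x ∈ V | proj n d x = b})] at this
        exact this.trans (hfiber b)
    _ = hBfin.toFinset.card * n' := by rw [Finset.sum_const, smul_eq_mul]
    _ = n' * hBfin.toFinset.card := Nat.mul_comm _ _

/-- If the graph `H` of `conv(π_d(V))` has edge-expansion at least `η`, if
`|π_d(V)| ≥ 0.9 |V|`, and if every fiber of `π_d` over `V` has size less than `n`,
then the graph `G` of `conv(V)` has edge-expansion at least `η / n`. -/
theorem stmt_12 (n d : ℕ) (hn : 1 ≤ n) (V : Set (Fin n → Bool)) (η : ℝ)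
    (hH : ∀ B ⊆ proj n d '' V, B.Nonempty → 2 * B.ncard ≤ (proj n d '' V).ncard →
      η * B.ncard ≤ (edgeBd (proj n d '' V) B : ℝ))
    (hW : (0.9 : ℝ) * V.ncard ≤ ((proj n d '' V).ncard : ℝ))
    (hfiber : ∀ w : Fin (n - d) → Bool, ({x ∈ V | proj n d x = w}).ncard < n) :
    ∀ A ⊆ V, A.Nonempty → 2 * A.ncard ≤ V.ncard →
      (η / n) * A.ncard ≤ (edgeBd V A : ℝ) := by
  intro A hAV hAne hAcard
  have hVne : V.Nonempty := ⟨hAne.choose, hAV hAne.choose_spec⟩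
  have hApos : 0 < A.ncard := (Set.ncard_pos (Set.toFinite A)).mpr hAne
  have hn2 : 2 ≤ n := by
    rcases Nat.lt_or_ge n 2 with h | h
    · exfalso
      obtain ⟨x, hx⟩ := hVne
      have h1 : 0 < ({y ∈ V | proj n d y = proj n d x}).ncard :=
        (Set.ncard_pos (Set.toFinite _)).mpr ⟨x, hx, rfl⟩
      have h2 := hfiber (proj n d x)
      omega
    · exact h
  have hnR : (0:ℝ) < n := by
    have : (0:ℕ) < n := by omega
    exact_mod_cast this
  by_cases hη : 0 ≤ η
  swap
  · push_neg at hη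
    have h1 : η / n ≤ 0 := div_nonpos_of_nonpos_of_nonneg hη.le (Nat.cast_nonneg n)
    have h2 : (0:ℝ) ≤ (edgeBd V A : ℝ) := Nat.cast_nonneg _
    have h3 : (0:ℝ) ≤ (A.ncard : ℝ) := Nat.cast_nonneg _
    nlinarith
  · set W := proj n d '' V with hWdef
    set B := proj n d '' A with hBdef
    have hBW : B ⊆ W := Set.image_mono hAV
    have hBne : B.Nonempty := hAne.image _
    have hproj : edgeBd W B ≤ edgeBd V A := edgeBd_proj_le V A hAV
    have hprojR : (edgeBd W B : ℝ) ≤ (edgeBd V A : ℝ) := by exact_mod_cast hproj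
    have hfib' : ∀ w, ({x ∈ V | proj n d x = w}).ncard ≤ n - 1 := by
      intro w; have := hfiber w; omega
    have hAB : A.ncard ≤ (n - 1) * B.ncard := card_le_mul_fibers V A hAV (n - 1) hfib'
    have hABn : (A.ncard : ℝ) ≤ (n : ℝ) * B.ncard := by
      have h : A.ncard ≤ n * B.ncard :=
        le_trans hAB (Nat.mul_le_mul_right _ (Nat.sub_le n 1))
      exact_mod_cast h
    by_cases hcase : 2 * B.ncard ≤ W.ncard
    · have hexp := hH B hBW hBne hcase
      calc (η / n) * A.ncard ≤ (η / n) * ((n:ℝ) * B.ncard) :=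
            mul_le_mul_of_nonneg_left hABn (div_nonneg hη hnR.le)
        _ = η * B.ncard := by field_simp
        _ ≤ (edgeBd W B : ℝ) := hexp
        _ ≤ (edgeBd V A : ℝ) := hprojR
    · push_neg at hcase
      have hsum : (W \ B).ncard + B.ncard = W.ncard := by
        have h1 := Set.ncard_diff hBW (Set.toFinite B)
        have h2 := Set.ncard_le_ncard hBW (Set.toFinite W)
        omega
      have hBA : B.ncard ≤ A.ncard := Set.ncard_image_le (Set.toFinite A)
      have hvr : 2 * (A.ncard:ℝ) ≤ (V.ncard:ℝ) := by exact_mod_cast hAcard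
      have hB'R : (0.8:ℝ) * A.ncard ≤ ((W \ B).ncard : ℝ) := by
        have h1 : ((W \ B).ncard : ℝ) + B.ncard = W.ncard := by exact_mod_cast hsum
        have h2 : (B.ncard:ℝ) ≤ A.ncard := by exact_mod_cast hBA
        nlinarith [hW]
      have hB'ne : (W \ B).Nonempty := by
        rw [← Set.ncard_pos (Set.toFinite _)]
        have hAposR : (0:ℝ) < (A.ncard : ℝ) := by exact_mod_cast hApos
        have : (0:ℝ) < ((W \ B).ncard : ℝ) := by nlinarith
        exact_mod_cast this
      have hhalf : 2 * (W \ B).ncard ≤ W.ncard := by omega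
      have hexp := hH (W \ B) Set.diff_subset hB'ne hhalf
      have hswap : edgeBd W (W \ B) = edgeBd W B := (edgeBd_compl W B hBW).symm
      have hAn : (A.ncard : ℝ) ≤ (n : ℝ) * ((W \ B).ncard : ℝ) := by
        have hn2R : (2:ℝ) ≤ (n:ℝ) := by exact_mod_cast hn2
        have hAposR : (0:ℝ) ≤ (A.ncard : ℝ) := Nat.cast_nonneg _
        nlinarith
      calc (η / n) * A.ncard ≤ (η / n) * ((n:ℝ) * ((W \ B).ncard : ℝ)) :=
            mul_le_mul_of_nonneg_left hAn (div_nonneg hη hnR.le)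
        _ = η * ((W \ B).ncard : ℝ) := by field_simp
        _ ≤ (edgeBd W (W \ B) : ℝ) := hexp
        _ = (edgeBd W B : ℝ) := by rw [hswap]
        _ ≤ (edgeBd V A : ℝ) := hprojR
end

section
/- Let u,v ∈ {0,1}^n with dist_H(u,v) = d, and let V be p-Bernoulli random. The probability that uv is an edge of the graph of conv(V) is at most (1−p²)^{2^{d−1}−1} ≤ exp(−p²(2^{d−1}−1)). -/
open MeasureTheory ProbabilityTheory ENNReal

open Finset

noncomputable def randomSubset (n : ℕ) (p : ℝ≥0∞) (hp : p ≤ 1) :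
    Measure ((Fin n → Bool) → Bool) :=
  Measure.pi (fun _ => (PMF.bernoulli p.toNNReal
    (by simpa using ENNReal.toNNReal_mono ENNReal.one_ne_top hp)).toMeasure)

lemma key_sum {I : Type*} [Fintype I] [DecidableEq I] (w : Bool → ℝ≥0∞)
    (hw : w true + w false = 1) {N : ℕ} (s t : Fin N → I)
    (hs : Function.Injective s) (ht : Function.Injective t)
    (hst : ∀ k k', s k ≠ t k') :
    ∑ ω : I → Bool, (if (∀ k, ¬(ω (s k) = true ∧ ω (t k) = true)) then ∏ i, w (ω i) else 0)
      = (w false + w true * w false) ^ N := by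
  classical
  set dd : Bool → ℝ≥0∞ := fun a => if a = true then 0 else 1 with hdd
  set ee : Bool → ℝ≥0∞ := fun a => if a = true then 1 else 0 with hee
  have hc : ∀ ω : I → Bool,
      (if (∀ k, ¬(ω (s k) = true ∧ ω (t k) = true)) then (∏ i, w (ω i)) else 0)
      = (∏ k, (dd (ω (s k)) + ee (ω (s k)) * dd (ω (t k)))) * ∏ i, w (ω i) := by
    intro ω
    by_cases h : ∀ k, ¬(ω (s k) = true ∧ ω (t k) = true)
    · rw [if_pos h]
      have h1 : ∀ k, dd (ω (s k)) + ee (ω (s k)) * dd (ω (t k)) = 1 := by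
        intro k
        have hk := h k
        cases h1 : ω (s k) <;> cases h2 : ω (t k) <;>
          simp [hdd, hee, h1, h2] at hk ⊢
      rw [Finset.prod_congr rfl (fun k _ => h1 k), Finset.prod_const_one, one_mul]
    · rw [if_neg h]
      push_neg at h
      obtain ⟨k, h1, h2⟩ := h
      rw [Finset.prod_eq_zero (Finset.mem_univ k), zero_mul]
      simp [hdd, hee, h1, h2]
  simp_rw [hc, Fintype.prod_add, Finset.sum_mul]
  rw [Finset.sum_comm]
  have main : ∀ T : Finset (Fin N),
      (∑ ω : I → Bool,
        (∏ k ∈ T, dd (ω (s k))) * (∏ k ∈ Tᶜ, ee (ω (s k)) * dd (ω (t k))) * ∏ i, w (ω i))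
      = ∏ k : Fin N, (if k ∈ T then w false else w true * w false) := by
    intro T
    set M : I → Bool → ℝ≥0∞ := fun i b =>
      (∏ k ∈ T, if s k = i then dd b else 1)
      * ((∏ k ∈ Tᶜ, if s k = i then ee b else 1)
      * (∏ k ∈ Tᶜ, if t k = i then dd b else 1)) with hM
    have e1 : ∀ (ω : I → Bool) (c : Bool → ℝ≥0∞) (z : Fin N → I) (S : Finset (Fin N)),
        ∏ i, ∏ k ∈ S, (if z k = i then c (ω i) else 1) = ∏ k ∈ S, c (ω (z k)) := by
      intro ω c z S
      rw [Finset.prod_comm]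
      refine Finset.prod_congr rfl fun k _ => ?_
      rw [Finset.prod_ite_eq, if_pos (Finset.mem_univ _)]
    have step1 : ∀ ω : I → Bool,
        (∏ k ∈ T, dd (ω (s k))) * (∏ k ∈ Tᶜ, ee (ω (s k)) * dd (ω (t k))) * ∏ i, w (ω i)
        = ∏ i, (w (ω i) * M i (ω i)) := by
      intro ω
      simp only [hM, Finset.prod_mul_distrib]
      rw [e1 ω dd s T, e1 ω ee s Tᶜ, e1 ω dd t Tᶜ]
      ring
    rw [Finset.sum_congr rfl fun ω _ => step1 ω]
    rw [← Fintype.prod_sum (fun i b => w b * M i b)]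
    -- evaluate ∏ i, ∑ b, w b * M i b
    have hFs : ∀ k₀ : Fin N, (∑ b, w b * M (s k₀) b)
        = if k₀ ∈ T then w false else w true := by
      intro k₀
      have h2 : ∀ k, ¬(t k = s k₀) := fun k h => hst k₀ k h.symm
      have hMs : ∀ b, M (s k₀) b = if k₀ ∈ T then dd b else ee b := by
        intro b
        rw [hM]
        simp only [show ∀ k, (t k = s k₀) = False from fun k => by simp [h2 k], if_false]
        have r1 : (∏ k ∈ T, if s k = s k₀ then dd b else 1) = if k₀ ∈ T then dd b else 1 := by
          simp only [hs.eq_iff]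
          exact Finset.prod_ite_eq' T k₀ (fun _ => dd b)
        have r2 : (∏ k ∈ Tᶜ, if s k = s k₀ then ee b else 1) = if k₀ ∈ Tᶜ then ee b else 1 := by
          simp only [hs.eq_iff]
          exact Finset.prod_ite_eq' Tᶜ k₀ (fun _ => ee b)
        rw [r1, r2, Finset.prod_const_one]
        by_cases hk : k₀ ∈ T <;> simp [hk]
      rw [Fintype.sum_bool]
      by_cases hk : k₀ ∈ T <;> simp [hMs, hk, hdd, hee, hw]
    have hFt : ∀ k₀ : Fin N, (∑ b, w b * M (t k₀) b)
        = if k₀ ∈ T then 1 else w false := by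
      intro k₀
      have h2 : ∀ k, ¬(s k = t k₀) := fun k h => hst k k₀ h
      have hMt : ∀ b, M (t k₀) b = if k₀ ∈ T then 1 else dd b := by
        intro b
        rw [hM]
        simp only [show ∀ k, (s k = t k₀) = False from fun k => by simp [h2 k], if_false]
        have r3 : (∏ k ∈ Tᶜ, if t k = t k₀ then dd b else 1) = if k₀ ∈ Tᶜ then dd b else 1 := by
          simp only [ht.eq_iff]
          exact Finset.prod_ite_eq' Tᶜ k₀ (fun _ => dd b)
        rw [r3, Finset.prod_const_one, Finset.prod_const_one]
        by_cases hk : k₀ ∈ T <;> simp [hk]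
      rw [Fintype.sum_bool]
      by_cases hk : k₀ ∈ T <;> simp [hMt, hk, hdd, hee, hw]
    have hFout : ∀ i, (∀ k, s k ≠ i) → (∀ k, t k ≠ i) → (∑ b, w b * M i b) = 1 := by
      intro i h1 h2
      have : ∀ b, M i b = 1 := by
        intro b; rw [hM]; simp [h1, h2]
      simp [this, Fintype.sum_bool, hw]
    set A : Finset I := (univ.image s) ∪ (univ.image t) with hA
    have houtside : ∀ i ∈ univ, i ∉ A → (∑ b, w b * M i b) = 1 := by
      intro i _ hi
      rw [hA] at hi
      simp only [Finset.mem_union, Finset.mem_image, Finset.mem_univ, true_and] at hi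
      push_neg at hi
      exact hFout i (fun k => hi.1 k) (fun k => hi.2 k)
    rw [← Finset.prod_subset (Finset.subset_univ A) houtside]
    have hdisj : Disjoint (univ.image s) (univ.image t) := by
      rw [Finset.disjoint_left]
      rintro x hx hx'
      simp only [Finset.mem_image, Finset.mem_univ, true_and] at hx hx'
      obtain ⟨k, rfl⟩ := hx
      obtain ⟨k', hk'⟩ := hx'
      exact hst k k' hk'.symm
    rw [hA, Finset.prod_union hdisj,
      Finset.prod_image (fun a _ b _ h => hs h), Finset.prod_image (fun a _ b _ h => ht h),
      ← Finset.prod_mul_distrib]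
    refine Finset.prod_congr rfl fun k _ => ?_
    rw [hFs k, hFt k]
    by_cases hk : k ∈ T <;> simp [hk]
  rw [Finset.sum_congr rfl (fun T _ => main T)]
  have split : ∀ T : Finset (Fin N), (∏ k : Fin N, if k ∈ T then w false else w true * w false)
      = (∏ _k ∈ T, w false) * ∏ _k ∈ Tᶜ, (w true * w false) := by
    intro T
    rw [← Finset.prod_mul_prod_compl T]
    congr 1
    · exact Finset.prod_congr rfl fun k hk => if_pos hk
    · exact Finset.prod_congr rfl fun k hk => if_neg (by simpa using hk)
  rw [Finset.sum_congr rfl (fun T _ => split T), ← Fintype.prod_add]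
  simp [Finset.prod_const]


/-- If `dist_H(u,v) = d` and `V` is `p`-Bernoulli random, then the probability that `uv`
is an edge of the graph of `conv(V)` is at most `(1 − p²)^{2^{d−1} − 1}`, which is at most
`exp(−p²(2^{d−1} − 1))`. -/
theorem stmt_15 (n d : ℕ) (hd : 1 ≤ d) (p : ℝ) (hp0 : 0 ≤ p) (hp1 : p ≤ 1)
    (u v : Fin n → Bool) (huv : hammingDist u v = d) :
    randomSubset n (ENNReal.ofReal p) (ENNReal.ofReal_le_one.mpr hp1)
        {ω | IsPolytopeEdge {x | ω x = true} u v}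
      ≤ ENNReal.ofReal ((1 - p ^ 2) ^ (2 ^ (d - 1) - 1)) ∧
    (1 - p ^ 2) ^ (2 ^ (d - 1) - 1) ≤ Real.exp (-(p ^ 2 * (2 ^ (d - 1) - 1))) := by
  classical
  set N := 2 ^ (d - 1) - 1 with hN
  have hp2 : p ^ 2 ≤ 1 := pow_le_one₀ hp0 hp1
  have h1p2 : (0:ℝ) ≤ 1 - p ^ 2 := by linarith
  have h2pow : (1:ℕ) ≤ 2 ^ (d - 1) := Nat.one_le_two_pow
  have hNcast : (N : ℝ) = 2 ^ (d - 1) - 1 := by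
    rw [hN, Nat.cast_sub h2pow]; push_cast; ring
  have part2 : (1 - p ^ 2) ^ N ≤ Real.exp (-(p ^ 2 * (2 ^ (d - 1) - 1))) := by
    have hb : 1 - p ^ 2 ≤ Real.exp (-(p ^ 2)) := by
      have := Real.add_one_le_exp (-(p ^ 2)); linarith
    calc (1 - p ^ 2) ^ N ≤ (Real.exp (-(p ^ 2))) ^ N := pow_le_pow_left₀ h1p2 hb N
      _ = Real.exp ((N : ℝ) * (-(p ^ 2))) := (Real.exp_nat_mul _ N).symm
      _ = Real.exp (-(p ^ 2 * (2 ^ (d - 1) - 1))) := by rw [hNcast]; ring_nf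
  refine ⟨?_, part2⟩
  -- find a coordinate where u and v differ
  have hune : u ≠ v := by
    intro h; rw [h, hammingDist_self] at huv; omega
  have hex : ∃ i0, u i0 ≠ v i0 := by
    by_contra h; push_neg at h; exact hune (funext h)
  obtain ⟨i0, hi0⟩ := hex
  -- the involution
  set σ : (Fin n → Bool) → (Fin n → Bool) := fun x i => if u i = v i then x i else !(x i)
    with hσdef
  have hσσ : ∀ x, σ (σ x) = x := by
    intro x; funext i; by_cases h : u i = v i <;> simp [hσdef, h]
  have hσinj : Function.Injective σ := Function.LeftInverse.injective hσσ
  have hσu : σ u = v := by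
    funext i
    by_cases h : u i = v i
    · simpa [hσdef, h] using h
    · cases hui : u i <;> cases hvi : v i <;> simp [hσdef, hui, hvi] <;> simp [hui, hvi] at h
  -- the cube half
  set Scube : Finset (Fin n → Bool) :=
    univ.filter (fun x => (∀ i, u i = v i → x i = u i) ∧ x i0 = u i0) with hScube
  have huS : u ∈ Scube := by simp [hScube]
  have hD : (univ.filter (fun i => u i ≠ v i)).card = d := huv
  have hi0D : i0 ∈ univ.filter (fun i => u i ≠ v i) := by simp [hi0]
  have hcard : Scube.card = 2 ^ (d - 1) := by
    have E : {x // x ∈ Scube} ≃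
        ({i : Fin n // i ∈ (univ.filter (fun i => u i ≠ v i)).erase i0} → Bool) :=
      { toFun := fun x i => x.1 i.1
        invFun := fun g =>
          ⟨fun i => if h : u i = v i then u i else if h2 : i = i0 then u i0
              else g ⟨i, by simp [Finset.mem_erase, h2, h]⟩, by
            simp only [hScube, Finset.mem_filter, Finset.mem_univ, true_and]
            exact ⟨fun i hi => by simp [hi], by simp [hi0]⟩⟩
        left_inv := by
          rintro ⟨x, hx⟩
          simp only [hScube, Finset.mem_filter, Finset.mem_univ, true_and] at hx
          apply Subtype.ext
          funext i
          by_cases h : u i = v i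
          · simp [dif_pos h, hx.1 i h]
          · by_cases h2 : i = i0
            · subst h2; simp [dif_neg h, hx.2]
            · simp [dif_neg h, dif_neg h2]
        right_inv := by
          intro g
          funext i
          obtain ⟨i, hi⟩ := i
          simp only [Finset.mem_erase, Finset.mem_filter, Finset.mem_univ, true_and] at hi
          simp only [dif_neg hi.2, dif_neg hi.1] }
    have h1 : Scube.card = Fintype.card {x // x ∈ Scube} := (Fintype.card_coe _).symm
    rw [h1, Fintype.card_congr E, Fintype.card_fun, Fintype.card_bool, Fintype.card_coe,
      Finset.card_erase_of_mem hi0D, hD]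
  set S' := Scube.erase u with hS'
  have hcard' : S'.card = N := by
    rw [hS', Finset.card_erase_of_mem huS, hcard, hN]
  set e := S'.equivFin with he
  set s : Fin N → (Fin n → Bool) := fun k => (e.symm (Fin.cast hcard'.symm k)).1 with hsdef
  have hsmem : ∀ k, s k ∈ S' := fun k => (e.symm _).2
  have hs : Function.Injective s := by
    intro a b h
    have h2 := e.symm.injective (Subtype.coe_injective h)
    have h3 : (Fin.cast hcard'.symm a).val = (Fin.cast hcard'.symm b).val := congrArg Fin.val h2
    exact Fin.ext h3
  set t : Fin N → (Fin n → Bool) := fun k => σ (s k) with htdef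
  have ht : Function.Injective t := hσinj.comp hs
  have hscube : ∀ k, (∀ i, u i = v i → s k i = u i) ∧ s k i0 = u i0 := by
    intro k
    have := Finset.mem_of_mem_erase (hsmem k)
    simpa [hScube] using this
  have hsu : ∀ k, s k ≠ u := fun k => (Finset.mem_erase.1 (hsmem k)).1
  have hti0 : ∀ k, t k i0 = !(u i0) := by
    intro k
    simp [htdef, hσdef, hi0, (hscube k).2]
  have hst : ∀ k k', s k ≠ t k' := by
    intro k k' h
    have h1 := congrFun h i0
    rw [(hscube k).2, hti0 k'] at h1
    cases hu : u i0 <;> simp [hu] at h1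
  -- geometry: the edge event is contained in the pair event
  have hsub : {ω : (Fin n → Bool) → Bool | IsPolytopeEdge {x | ω x = true} u v}
      ⊆ {ω | ∀ k, ¬(ω (s k) = true ∧ ω (t k) = true)} := by
    rintro ω hω k ⟨h1, h2⟩
    obtain ⟨hu, hv, a, b, hau, hav, hlt⟩ := hω
    have hxu : s k ≠ u := hsu k
    have hxv : s k ≠ v := by
      intro h
      exact hi0 ((hscube k).2.symm.trans (congrFun h i0))
    have hyu : t k ≠ u := by
      intro h
      have := (hti0 k).symm.trans (congrFun h i0)
      cases hu2 : u i0 <;> simp [hu2] at this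
    have hyv : t k ≠ v := by
      intro h
      exact hxu (hσinj (h.trans hσu.symm))
    have hx := hlt (s k) h1 hxu hxv
    have hy := hlt (t k) h2 hyu hyv
    have hsum : lin a (s k) + lin a (t k) = lin a u + lin a v := by
      unfold lin
      rw [← Finset.sum_add_distrib, ← Finset.sum_add_distrib]
      refine Finset.sum_congr rfl fun i _ => ?_
      by_cases h : u i = v i
      · have hxi : s k i = u i := (hscube k).1 i h
        have hyi : t k i = u i := by simp [htdef, hσdef, h, hxi]
        rw [hxi, hyi, ← h]
      · have hyi : t k i = !(s k i) := by simp [htdef, hσdef, h]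
        rw [hyi]
        cases hxi : s k i <;> cases hui : u i <;> cases hvi : v i <;> simp_all <;> ring
    rw [hau, hav] at hsum
    linarith
  -- the weight function
  set w : Bool → ℝ≥0∞ := fun b => if b = true then ENNReal.ofReal p else ENNReal.ofReal (1 - p)
    with hwdef
  have hν : ∀ b : Bool,
      (PMF.bernoulli (ENNReal.ofReal p).toNNReal
        (show (ENNReal.ofReal p).toNNReal ≤ 1 by
          rw [ENNReal.ofReal, ENNReal.toNNReal_coe]; exact Real.toNNReal_le_one.mpr hp1)).toMeasure {b} = w b := by
    intro b
    rw [PMF.toMeasure_apply_singleton _ b (measurableSet_singleton b)]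
    cases b
    · rw [PMF.bernoulli_apply]
      simp only [cond_false, hwdef, Bool.false_eq_true, if_false]
      rw [ENNReal.coe_sub, ENNReal.coe_one, ENNReal.coe_toNNReal ENNReal.ofReal_ne_top, ← ENNReal.ofReal_one, ← ENNReal.ofReal_sub _ hp0]
    · simp [PMF.bernoulli_apply, hwdef]
  have hw : w true + w false = 1 := by
    simp only [hwdef, if_true, Bool.false_eq_true, if_false]
    rw [← ENNReal.ofReal_add hp0 (by linarith)]
    norm_num
  have hsingle : ∀ ω : (Fin n → Bool) → Bool,
      randomSubset n (ENNReal.ofReal p) (ENNReal.ofReal_le_one.mpr hp1) {ω} = ∏ i, w (ω i) := by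
    intro ω
    rw [show ({ω} : Set ((Fin n → Bool) → Bool)) = Set.pi Set.univ (fun i => {ω i}) from
      (Set.univ_pi_singleton ω).symm]
    rw [randomSubset, Measure.pi_pi]
    exact Finset.prod_congr rfl fun i _ => hν (ω i)
  set CF : Finset ((Fin n → Bool) → Bool) :=
    univ.filter (fun ω => ∀ k, ¬(ω (s k) = true ∧ ω (t k) = true)) with hCF
  have hCsub : {ω : (Fin n → Bool) → Bool | ∀ k, ¬(ω (s k) = true ∧ ω (t k) = true)}
      ⊆ ⋃ ω ∈ CF, {ω} := by
    intro ω hω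
    simp only [Set.mem_iUnion, Set.mem_singleton_iff, exists_prop]
    exact ⟨ω, by simpa [hCF] using hω, rfl⟩
  calc randomSubset n (ENNReal.ofReal p) (ENNReal.ofReal_le_one.mpr hp1)
        {ω | IsPolytopeEdge {x | ω x = true} u v}
      ≤ randomSubset n (ENNReal.ofReal p) (ENNReal.ofReal_le_one.mpr hp1)
        {ω | ∀ k, ¬(ω (s k) = true ∧ ω (t k) = true)} := measure_mono hsub
    _ ≤ ∑ ω ∈ CF, randomSubset n (ENNReal.ofReal p) (ENNReal.ofReal_le_one.mpr hp1) {ω} :=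
        le_trans (measure_mono hCsub) (measure_biUnion_finset_le CF _)
    _ = ∑ ω ∈ CF, ∏ i, w (ω i) := Finset.sum_congr rfl fun ω _ => hsingle ω
    _ = ∑ ω : (Fin n → Bool) → Bool,
        (if (∀ k, ¬(ω (s k) = true ∧ ω (t k) = true)) then ∏ i, w (ω i) else 0) := by
        rw [hCF, Finset.sum_filter]
    _ = (w false + w true * w false) ^ N := key_sum w hw s t hs ht hst
    _ = ENNReal.ofReal ((1 - p ^ 2) ^ N) := by
        have hq : w false + w true * w false = ENNReal.ofReal (1 - p ^ 2) := by
          rw [hwdef]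
          simp only [if_true, Bool.false_eq_true, if_false]
          rw [← ENNReal.ofReal_mul hp0, ← ENNReal.ofReal_add (by linarith) (mul_nonneg hp0 (by linarith))]
          congr 1; ring
        rw [hq, ← ENNReal.ofReal_pow h1p2]
end
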